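/- arXiv:0707.1311 — 9 statements merged into one kernel-verified Lean document; each statement's English description precedes it below -/
import Mathlib

section
/- For all natural numbers ρ and γ with ρ < γ, we have 2·μ(ρ+1, γ) > μ(ρ, γ), where μ(ρ, γ) is defined as the product (2ρ+1)(2ρ+2)···(γ+ρ) divided by (ρ+1)(ρ+2)···γ when ρ < γ, and 1 otherwise. -/
/-- `mu ρ γ = ((2ρ+1)(2ρ+2)⋯(γ+ρ)) / ((ρ+1)(ρ+2)⋯γ)` if `ρ < γ`, and `1` otherwise;
equivalently `(γ+ρ)! ρ! / ((2ρ)! γ!)` when `ρ < γ`. -/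
def mu (ρ γ : ℕ) : ℚ :=
  if ρ < γ then ((γ + ρ).factorial * ρ.factorial : ℚ) / ((2 * ρ).factorial * γ.factorial)
  else 1

theorem two_mu_succ_gt (ρ γ : ℕ) (h : ρ < γ) : mu ρ γ < 2 * mu (ρ + 1) γ := by
  unfold mu
  rw [if_pos h]
  rcases lt_or_eq_of_le (Nat.succ_le_of_lt h) with h1 | h1
  · rw [if_pos h1]
    have hB : (0:ℚ) < ((2 * ρ).factorial * γ.factorial : ℕ) := by
      exact_mod_cast Nat.mul_pos (Nat.factorial_pos _) (Nat.factorial_pos _)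
    have hD : (0:ℚ) < ((2 * (ρ+1)).factorial * γ.factorial : ℕ) := by
      exact_mod_cast Nat.mul_pos (Nat.factorial_pos _) (Nat.factorial_pos _)
    push_cast at hB hD ⊢
    rw [mul_div_assoc', div_lt_div_iff₀ hB hD]
    have key : ((γ + ρ).factorial * ρ.factorial) * ((2 * (ρ+1)).factorial * γ.factorial)
        < (2 * ((γ + (ρ+1)).factorial * (ρ+1).factorial)) * ((2 * ρ).factorial * γ.factorial) := by
      have e1 : (γ + (ρ+1)).factorial = (γ + ρ + 1) * (γ + ρ).factorial := by
        rw [show γ + (ρ+1) = (γ + ρ) + 1 by ring]; rfl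
      have e2 : (ρ+1).factorial = (ρ+1) * ρ.factorial := rfl
      have e3 : (2 * (ρ+1)).factorial = (2*ρ+2) * ((2*ρ+1) * (2*ρ).factorial) := by
        rw [show 2 * (ρ+1) = (2*ρ+1) + 1 by ring]; rfl
      rw [e1, e2, e3]
      have hsmall : (2*ρ+2)*(2*ρ+1) < 2*((γ+ρ+1)*(ρ+1)) := by nlinarith [h]
      have hK : 0 < (γ + ρ).factorial * ρ.factorial * ((2 * ρ).factorial * γ.factorial) :=
        Nat.mul_pos (Nat.mul_pos (Nat.factorial_pos _) (Nat.factorial_pos _))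
          (Nat.mul_pos (Nat.factorial_pos _) (Nat.factorial_pos _))
      calc (γ + ρ).factorial * ρ.factorial * ((2*ρ+2) * ((2*ρ+1) * (2*ρ).factorial) * γ.factorial)
          = ((2*ρ+2)*(2*ρ+1)) * ((γ + ρ).factorial * ρ.factorial * ((2 * ρ).factorial * γ.factorial)) := by ring
        _ < (2*((γ+ρ+1)*(ρ+1))) * ((γ + ρ).factorial * ρ.factorial * ((2 * ρ).factorial * γ.factorial)) :=
            Nat.mul_lt_mul_of_lt_of_le hsmall (le_refl _) hK
        _ = 2 * ((γ+ρ+1) * (γ + ρ).factorial * ((ρ+1) * ρ.factorial)) * ((2 * ρ).factorial * γ.factorial) := by ring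
    exact_mod_cast key
  · rw [if_neg (by omega)]
    rw [← h1]
    have e1 : (ρ + 1 + ρ).factorial = (2*ρ+1) * (2*ρ).factorial := by
      rw [show ρ + 1 + ρ = (2*ρ) + 1 by ring]; rfl
    have e2 : (ρ+1).factorial = (ρ+1) * ρ.factorial := rfl
    rw [e1, e2]
    rw [div_lt_iff₀ (by positivity)]
    push_cast
    have hf2 : (0:ℚ) < ρ.factorial := by exact_mod_cast Nat.factorial_pos ρ
    have hf3 : (0:ℚ) < (2*ρ).factorial := by exact_mod_cast Nat.factorial_pos (2*ρ)
    nlinarith [mul_pos hf2 hf3]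
end

section
/- Let ρ, γ, γ₁ be natural numbers such that 2 ≤ ρ < γ ≤ ρ·γ₁ and ρ − 1 ≤ γ − γ₁. Then 2^ρ·μ(ρ, γ−1) + 2^(ρ−1)·μ(ρ−1, γ−γ₁) < 2^ρ·μ(ρ, γ). -/
lemma fact_cast_pos (n : ℕ) : (0:ℚ) < (n.factorial : ℚ) := by
  exact_mod_cast n.factorial_pos

lemma mu_pos (ρ γ : ℕ) : 0 < mu ρ γ := by
  unfold mu
  split
  · exact div_pos (mul_pos (fact_cast_pos _) (fact_cast_pos _))
      (mul_pos (fact_cast_pos _) (fact_cast_pos _))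
  · norm_num

lemma mu_eq (ρ γ : ℕ) (h : ρ ≤ γ) :
    mu ρ γ = ((γ + ρ).factorial * ρ.factorial : ℚ) / ((2 * ρ).factorial * γ.factorial) := by
  unfold mu
  split
  · rfl
  · next h' =>
    have hg : ρ = γ := le_antisymm h (not_lt.1 h')
    subst hg
    rw [show ρ + ρ = 2 * ρ by ring]
    rw [div_self]
    positivity

lemma mu_succ_right (ρ γ : ℕ) (h : ρ ≤ γ) :
    mu ρ (γ + 1) = mu ρ γ * (((γ:ℚ) + 1 + ρ) / (γ + 1)) := by
  rw [mu_eq ρ (γ+1) (h.trans (Nat.le_succ γ)), mu_eq ρ γ h]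
  have h1 : (γ + 1 + ρ).factorial = (γ + ρ + 1) * (γ + ρ).factorial := by
    rw [show γ + 1 + ρ = (γ + ρ) + 1 by ring]; exact Nat.factorial_succ _
  have h2 : (γ + 1).factorial = (γ + 1) * γ.factorial := Nat.factorial_succ _
  rw [h1, h2]
  have n1 := (fact_cast_pos (γ+ρ)).ne'
  have n2 := (fact_cast_pos γ).ne'
  have n3 := (fact_cast_pos (2*ρ)).ne'
  have n4 : ((γ:ℚ)+1) ≠ 0 := by positivity
  push_cast
  field_simp
  ring

lemma mu_succ_left (ρ γ : ℕ) (h : ρ + 1 ≤ γ) :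
    mu (ρ+1) γ = mu ρ γ * (((γ:ℚ) + ρ + 1) / (2 * (2 * ρ + 1))) := by
  rw [mu_eq (ρ+1) γ h, mu_eq ρ γ ((Nat.le_succ ρ).trans h)]
  have h1 : (γ + (ρ + 1)).factorial = (γ + ρ + 1) * (γ + ρ).factorial := by
    rw [show γ + (ρ + 1) = (γ + ρ) + 1 by ring]; exact Nat.factorial_succ _
  have h2 : (ρ + 1).factorial = (ρ + 1) * ρ.factorial := Nat.factorial_succ _
  have h3 : (2 * (ρ + 1)).factorial = (2 * ρ + 2) * ((2 * ρ + 1) * (2 * ρ).factorial) := by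
    rw [show 2 * (ρ + 1) = (2 * ρ + 1) + 1 by ring, Nat.factorial_succ, Nat.factorial_succ]
  rw [h1, h2, h3]
  have n1 := (fact_cast_pos (γ+ρ)).ne'
  have n2 := (fact_cast_pos γ).ne'
  have n3 := (fact_cast_pos (2*ρ)).ne'
  have n4 := (fact_cast_pos ρ).ne'
  push_cast
  field_simp

lemma mu_lb (ρ m : ℕ) (hρ : 1 ≤ ρ) (h : ρ ≤ m) :
    ∀ d : ℕ, mu ρ m * (((m:ℚ) + d + ρ * d) / (m + d)) ≤ mu ρ (m + d) := by
  have hm : (0:ℚ) < m := by exact_mod_cast lt_of_lt_of_le hρ h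
  intro d
  induction d with
  | zero =>
    simp only [Nat.cast_zero, add_zero, mul_zero]
    rw [div_self hm.ne', mul_one]
  | succ d ih =>
    have hmd : (0:ℚ) < (m:ℚ) + d := by positivity
    have hmd1 : (0:ℚ) < (m:ℚ) + d + 1 := by positivity
    rw [show m + (d+1) = (m + d) + 1 by ring, mu_succ_right ρ (m+d) (h.trans (Nat.le_add_right m d))]
    push_cast
    have key : ((m:ℚ) + (d+1) + ρ * (d+1)) / (m + (d+1)) ≤
        ((m:ℚ) + d + ρ * d) / (m + d) * (((m:ℚ) + d + 1 + ρ) / (m + d + 1)) := by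
      rw [div_le_iff₀ (by positivity), div_mul_div_comm, div_mul_eq_mul_div, le_div_iff₀ (by positivity)]
      have hρ' : (1:ℚ) ≤ (ρ:ℚ) := by exact_mod_cast hρ
      have hd : (0:ℚ) ≤ (d:ℚ) := Nat.cast_nonneg d
      nlinarith [mul_nonneg hmd1.le (mul_nonneg hd (Nat.cast_nonneg ρ)),
        mul_nonneg (mul_nonneg hmd1.le (mul_nonneg hd (Nat.cast_nonneg ρ))) (Nat.cast_nonneg ρ)]
    calc mu ρ m * (((m:ℚ) + (d+1) + ρ * (d+1)) / (m + (d+1)))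
        ≤ mu ρ m * ((((m:ℚ) + d + ρ * d) / (m + d)) * (((m:ℚ) + d + 1 + ρ) / (m + d + 1))) := by
          apply mul_le_mul_of_nonneg_left _ (mu_pos ρ m).le
          convert key using 3 <;> push_cast <;> ring_nf
      _ = (mu ρ m * (((m:ℚ) + d + ρ * d) / (m + d))) * (((m:ℚ) + d + 1 + ρ) / (m + d + 1)) := by ring
      _ ≤ mu ρ (m + d) * (((m:ℚ) + d + 1 + ρ) / (m + d + 1)) := by
          apply mul_le_mul_of_nonneg_right ih
          positivity
/-- Lemma: if `2 ≤ ρ < γ ≤ ρ·γ₁` and `ρ − 1 ≤ γ − γ₁`, then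
`2^ρ·μ(ρ, γ−1) + 2^(ρ−1)·μ(ρ−1, γ−γ₁) < 2^ρ·μ(ρ, γ)`. -/
theorem mu_numerical_criterion (ρ γ γ₁ : ℕ) (h1 : 2 ≤ ρ) (h2 : ρ < γ) (h3 : γ ≤ ρ * γ₁)
    (h4 : ρ - 1 + γ₁ ≤ γ) :
    (2 : ℚ) ^ ρ * mu ρ (γ - 1) + 2 ^ (ρ - 1) * mu (ρ - 1) (γ - γ₁) < 2 ^ ρ * mu ρ γ := by
  -- reparametrize: ρ = r+1, γ₁ = d+1, γ = m + d + 1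
  have hγ₁pos : 1 ≤ γ₁ := by
    rcases Nat.eq_zero_or_pos γ₁ with h | h
    · subst h; simp at h3; omega
    · exact h
  obtain ⟨r, rfl⟩ : ∃ r, ρ = r + 1 := ⟨ρ - 1, by omega⟩
  obtain ⟨d, rfl⟩ : ∃ d, γ₁ = d + 1 := ⟨γ₁ - 1, by omega⟩
  obtain ⟨m, rfl⟩ : ∃ m, γ = m + (d + 1) := ⟨γ - (d + 1), by omega⟩
  have hr : 1 ≤ r := by omega
  have hrm : r ≤ m := by omega
  have hrn : r + 1 ≤ m + d := by omega
  -- clean up the natural number subtractions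
  have e1 : m + (d + 1) - 1 = m + d := by omega
  have e2 : r + 1 - 1 = r := by omega
  have e3 : m + (d + 1) - (d + 1) = m := by omega
  have e4 : m + (d + 1) = (m + d) + 1 := by omega
  rw [e1, e2, e3, e4]
  -- recurrences
  have hL3 := mu_succ_right (r + 1) (m + d) hrn
  have hL2 := mu_succ_left r (m + d) hrn
  have hL1 := mu_lb r m hr hrm d
  set A := mu r m with hAdef
  set B := mu r (m + d) with hBdef
  set C := mu (r + 1) (m + d) with hCdef
  have hA : 0 < A := mu_pos r m
  have hB : 0 < B := mu_pos r (m + d)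
  have hC : 0 < C := mu_pos (r + 1) (m + d)
  set n : ℚ := (m : ℚ) + d with hndef
  have hn0 : 0 < n := by
    rw [hndef]
    have hm1 : (1:ℚ) ≤ (m:ℚ) := by exact_mod_cast hr.trans hrm
    have hd0 : (0:ℚ) ≤ (d:ℚ) := Nat.cast_nonneg d
    linarith
  have hn1 : 0 < n + 1 := by positivity
  have hrq : (1:ℚ) ≤ (r:ℚ) := by exact_mod_cast hr
  have hrnq : (r:ℚ) + 1 ≤ n := by
    rw [hndef]; exact_mod_cast hrn
  have hdq : (0:ℚ) ≤ (d:ℚ) := Nat.cast_nonneg d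
  -- the key numeric inequality
  have h3q : n + 1 ≤ ((r:ℚ) + 1) * ((d:ℚ) + 1) := by
    rw [hndef]; push_cast; exact_mod_cast h3
  have key : n * ((2 * (r:ℚ) + 1) * (n + 1)) < (n + r * d) * ((n + r + 1) * (r + 1)) := by
    have e : (0:ℚ) ≤ ((r:ℚ) + 1) * d - (n - r) := by nlinarith
    nlinarith [mul_nonneg (mul_nonneg (by linarith : (0:ℚ) ≤ (r:ℚ)) e) (by linarith : (0:ℚ) ≤ n + r + 1),
      mul_pos (mul_pos (lt_of_lt_of_le one_pos hrq) (by linarith : (0:ℚ) < (r:ℚ) + 1)) (by linarith : (0:ℚ) < n - r)]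
  -- lower bound for C in terms of A
  have hC' : A * ((n + r * d) / n) * ((n + r + 1) / (2 * (2 * r + 1))) ≤ C := by
    rw [hL2]
    have : A * (((m:ℚ) + d + r * d) / ((m:ℚ) + d)) ≤ B := hL1
    calc A * ((n + r * d) / n) * ((n + r + 1) / (2 * (2 * r + 1)))
        ≤ B * ((n + r + 1) / (2 * (2 * r + 1))) := by
          apply mul_le_mul_of_nonneg_right _ (div_nonneg (by linarith) (by positivity))
          exact this
      _ = B * ((((m + d : ℕ) : ℚ) + (r:ℚ) + 1) / (2 * (2 * (r:ℚ) + 1))) := by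
          rw [hndef]; push_cast; ring
  -- rewrite the RHS using hL3
  rw [hL3]
  have hsplit : (2:ℚ) ^ (r + 1) * (C * (((m + d : ℕ) : ℚ) + 1 + ((r:ℕ) + 1 : ℕ)) / (((m + d : ℕ) : ℚ) + 1))
      = 2 ^ (r + 1) * C + 2 ^ (r + 1) * C * (((r:ℚ) + 1) / (n + 1)) := by
    push_cast
    rw [hndef]
    field_simp
  have hmain : (2:ℚ) ^ r * A < 2 ^ (r + 1) * C * (((r:ℚ) + 1) / (n + 1)) := by
    have step1 : (2:ℚ) ^ r * A < 2 ^ (r + 1) * (A * ((n + r * d) / n) * ((n + r + 1) / (2 * (2 * r + 1)))) * (((r:ℚ) + 1) / (n + 1)) := by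
      have hQ : (0:ℚ) < n * ((2 * (r:ℚ) + 1) * (n + 1)) :=
        mul_pos hn0 (mul_pos (by linarith) hn1)
      have hn0' : n ≠ 0 := hn0.ne'
      have hn1' : n + 1 ≠ 0 := hn1.ne'
      have hre : (2:ℚ) ^ (r + 1) * (A * ((n + r * d) / n) * ((n + r + 1) / (2 * (2 * r + 1)))) * (((r:ℚ) + 1) / (n + 1))
          = 2 ^ r * A * (((n + r * d) * ((n + r + 1) * ((r:ℚ) + 1))) / (n * ((2 * (r:ℚ) + 1) * (n + 1)))) := by
        rw [pow_succ]
        field_simp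
      rw [hre]
      have hfrac : (1:ℚ) < ((n + r * d) * ((n + r + 1) * ((r:ℚ) + 1))) / (n * ((2 * (r:ℚ) + 1) * (n + 1))) :=
        (one_lt_div hQ).mpr key
      calc (2:ℚ) ^ r * A = 2 ^ r * A * 1 := (mul_one _).symm
        _ < 2 ^ r * A * (((n + r * d) * ((n + r + 1) * ((r:ℚ) + 1))) / (n * ((2 * (r:ℚ) + 1) * (n + 1)))) := by
            apply mul_lt_mul_of_pos_left hfrac
            positivity
    calc (2:ℚ) ^ r * A < 2 ^ (r + 1) * (A * ((n + r * d) / n) * ((n + r + 1) / (2 * (2 * r + 1)))) * (((r:ℚ) + 1) / (n + 1)) := step1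
      _ ≤ 2 ^ (r + 1) * C * (((r:ℚ) + 1) / (n + 1)) := by
          apply mul_le_mul_of_nonneg_right _ (by positivity)
          exact mul_le_mul_of_nonneg_left hC' (by positivity)
  calc (2:ℚ) ^ (r + 1) * C + 2 ^ r * A
      < 2 ^ (r + 1) * C + 2 ^ (r + 1) * C * (((r:ℚ) + 1) / (n + 1)) := by linarith
    _ = 2 ^ (r + 1) * (C * ((((m + d : ℕ) : ℚ) + 1 + ((r:ℕ) + 1 : ℕ)) / (((m + d : ℕ) : ℚ) + 1))) := by
        rw [← hsplit]; ring
end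

section
/- Let P be a finite partially ordered set with c elements, let 𝒜 be the collection of antichains of P (including the empty set), and let r be the maximum cardinality of an antichain of P. Then |𝒜| ≤ 2^r · μ(r, c). -/
open Finset

section aux
variable {α : Type*} [PartialOrder α]

open Finset


lemma chain_antichain_eq {C A : Finset α} (hC : IsChain (· ≤ ·) (C : Set α))
    (hA : IsAntichain (· ≤ ·) (A : Set α)) {x y : α} (hxA : x ∈ A) (hxC : x ∈ C)
    (hyA : y ∈ A) (hyC : y ∈ C) : x = y := by
  by_contra hne
  rcases hC (by exact_mod_cast hxC) (by exact_mod_cast hyC) hne with h | h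
  · exact hA (by exact_mod_cast hxA) (by exact_mod_cast hyA) hne h
  · exact hA (by exact_mod_cast hyA) (by exact_mod_cast hxA) (Ne.symm hne) h

lemma antichain_card_le_of_cover {L : List (Finset α)} {A : Finset α}
    (hchain : ∀ C ∈ L, IsChain (· ≤ ·) (C : Set α))
    (hA : IsAntichain (· ≤ ·) (A : Set α))
    (hcov : ∀ x ∈ A, ∃ i : Fin L.length, x ∈ L.get i) :
    A.card ≤ L.length := by
  classical
  let f : {x // x ∈ A} → Fin L.length := fun x => (hcov x x.2).choose
  have hf : ∀ x : {x // x ∈ A}, (x : α) ∈ L.get (f x) := fun x => (hcov x x.2).choose_spec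
  have hinj : Function.Injective f := by
    intro x y hxy
    have := hf y
    rw [← hxy] at this
    exact Subtype.ext (chain_antichain_eq (hchain _ (L.get_mem _)) hA x.2 (hf x) y.2 this)
  calc A.card = Fintype.card {x // x ∈ A} := (Fintype.card_coe A).symm
    _ ≤ Fintype.card (Fin L.length) := Fintype.card_le_of_injective f hinj
    _ = L.length := Fintype.card_fin _

lemma antichain_meets_chains {L : List (Finset α)} {A : Finset α}
    (hchain : ∀ C ∈ L, IsChain (· ≤ ·) (C : Set α))
    (hA : IsAntichain (· ≤ ·) (A : Set α))
    (hcov : ∀ x ∈ A, ∃ i : Fin L.length, x ∈ L.get i)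
    (hcard : A.card = L.length) :
    ∀ i : Fin L.length, ∃ x ∈ A, x ∈ L.get i := by
  classical
  let f : {x // x ∈ A} → Fin L.length := fun x => (hcov x x.2).choose
  have hf : ∀ x : {x // x ∈ A}, (x : α) ∈ L.get (f x) := fun x => (hcov x x.2).choose_spec
  have hinj : Function.Injective f := by
    intro x y hxy
    have := hf y
    rw [← hxy] at this
    exact Subtype.ext (chain_antichain_eq (hchain _ (L.get_mem _)) hA x.2 (hf x) y.2 this)
  have hbij : Function.Bijective f := by
    rw [Fintype.bijective_iff_injective_and_card]
    exact ⟨hinj, by simpa [Fintype.card_coe] using hcard⟩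
  intro i
  obtain ⟨x, hx⟩ := hbij.2 i
  exact ⟨x, x.2, hx ▸ hf x⟩



lemma dilworth (s : Finset α) :
    ∃ L : List (Finset α),
      (∀ C ∈ L, IsChain (· ≤ ·) (C : Set α)) ∧
      (∀ C ∈ L, C ⊆ s) ∧
      (∀ x ∈ s, ∃ i : Fin L.length, x ∈ L.get i) ∧
      List.Pairwise Disjoint L ∧
      ∃ A : Finset α, A ⊆ s ∧ IsAntichain (· ≤ ·) (A : Set α) ∧ A.card = L.length := by
  classical
  induction s using Finset.strongInduction with
  | _ s IH =>
  by_cases hs : s.Nonempty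
  case neg =>
    refine ⟨[], by simp, by simp, ?_, by simp, ∅, by simp, by simp [IsAntichain], by simp⟩
    intro x hx; exact absurd ⟨x, hx⟩ hs
  case pos =>
  obtain ⟨a, haS, hamax⟩ := s.exists_maximal hs
  set s' := s.erase a with hs'def
  have hss : s' ⊂ s := erase_ssubset haS
  obtain ⟨L, hLchain, hLsub, hLcov, hLdisj, A', hA'sub, hA'anti, hA'card⟩ := IH s' hss
  set k := L.length with hkdef
  have hs'sub : s' ⊆ s := hss.subset
  by_cases hk : k = 0
  · -- then L = [], s' = ∅, s = {a}
    have hLnil : L = [] := List.length_eq_zero_iff.mp hk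
    have hsep : s' = ∅ := by
      by_contra hne
      obtain ⟨x, hx⟩ := nonempty_iff_ne_empty.mpr hne
      obtain ⟨i, _⟩ := hLcov x hx
      rw [hLnil] at i; exact absurd i.2 (by simp)
    have hseq : s = {a} := by
      ext x; simp only [mem_singleton]
      constructor
      · intro hx
        by_contra hne
        have : x ∈ s' := Finset.mem_erase.mpr ⟨hne, hx⟩
        simp [hsep] at this
      · rintro rfl; exact haS
    refine ⟨[{a}], ?_, ?_, ?_, by simp, {a}, ?_, ?_, by simp⟩
    · intro C hC; simp at hC; subst hC
      simp [IsChain, Set.Pairwise]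
    · intro C hC; simp at hC; subst hC; simp [hseq]
    · intro x hx; rw [hseq] at hx; simp at hx; subst hx
      exact ⟨⟨0, by simp⟩, by simp⟩
    · simp [hseq]
    · rw [coe_singleton]; exact Set.subsingleton_singleton.isAntichain _
  · -- k ≥ 1 : Galvin's argument
    have hA'cov : ∀ x ∈ A', ∃ i : Fin L.length, x ∈ L.get i :=
      fun x hx => hLcov x (hA'sub hx)
    -- the set of elements of chain i belonging to some k-antichain of s'
    set D : Fin k → Finset α := fun i => (L.get i).filter
      (fun x => ∃ B : Finset α, B ⊆ s' ∧ IsAntichain (· ≤ ·) (B : Set α) ∧ B.card = k ∧ x ∈ B)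
      with hDdef
    have hDne : ∀ i, (D i).Nonempty := by
      intro i
      obtain ⟨x, hxA', hxC⟩ := antichain_meets_chains hLchain hA'anti hA'cov hA'card i
      exact ⟨x, mem_filter.mpr ⟨hxC, A', hA'sub, hA'anti, hA'card, hxA'⟩⟩
    -- top element of D i
    have hDtop : ∀ i, ∃ m ∈ D i, ∀ y ∈ D i, y ≤ m := by
      intro i
      obtain ⟨m, hm, hmax⟩ := (D i).exists_maximal (hDne i)
      refine ⟨m, hm, fun y hy => ?_⟩
      by_cases hym : y = m
      · exact hym.le
      · rcases hLchain _ (L.get_mem _) (by exact_mod_cast (mem_filter.mp hy).1)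
          (by exact_mod_cast (mem_filter.mp hm).1) hym with h | h
        · exact h
        · exact hmax hy h
    choose m hmD hmtop using hDtop
    have hmC : ∀ i, m i ∈ L.get i := fun i => (mem_filter.mp (hmD i)).1
    have hmB : ∀ i, ∃ B : Finset α, B ⊆ s' ∧ IsAntichain (· ≤ ·) (B : Set α) ∧ B.card = k ∧ m i ∈ B :=
      fun i => (mem_filter.mp (hmD i)).2
    have hdisj' : ∀ i j : Fin k, i ≠ j → Disjoint (L.get i) (L.get j) := by
      intro i j hij
      rcases lt_or_gt_of_ne hij with h | h
      · exact List.pairwise_iff_get.mp hLdisj i j h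
      · exact (List.pairwise_iff_get.mp hLdisj j i h).symm
    -- the m i's are in s'
    have hms' : ∀ i, m i ∈ s' := by
      intro i
      obtain ⟨B, hBsub, _, _, hmBmem⟩ := hmB i
      exact hBsub hmBmem
    -- key: every k-antichain of s' has an element ≤ m i in chain i
    have hkey : ∀ (i : Fin k) (B : Finset α), B ⊆ s' → IsAntichain (· ≤ ·) (B : Set α) →
        B.card = k → ∃ y ∈ B, y ∈ L.get i ∧ y ≤ m i := by
      intro i B hBsub hBanti hBcard
      obtain ⟨y, hyB, hyC⟩ := antichain_meets_chains hLchain hBanti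
        (fun x hx => hLcov x (hBsub hx)) hBcard i
      refine ⟨y, hyB, hyC, hmtop i y (mem_filter.mpr ⟨hyC, B, hBsub, hBanti, hBcard, hyB⟩)⟩
    -- pairwise incomparability of the m i
    have hpair : ∀ i j : Fin k, i ≠ j → ¬ m i ≤ m j := by
      intro i j hij hle
      obtain ⟨B, hBsub, hBanti, hBcard, hmj⟩ := hmB j
      obtain ⟨y, hyB, hyC, hym⟩ := hkey i B hBsub hBanti hBcard
      have hyne : y ≠ m j := by
        intro h; subst h
        exact (hdisj' i j hij).forall_ne_finset hyC (hmC j) rfl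
      exact hBanti (by exact_mod_cast hyB) (by exact_mod_cast hmj) hyne (hym.trans hle)
    have hmne : ∀ i j : Fin k, i ≠ j → m i ≠ m j := by
      intro i j hij h
      exact (hdisj' i j hij).forall_ne_finset (hmC i) (h ▸ hmC j) rfl
    by_cases hcase : ∃ i : Fin k, m i ≤ a
    · -- Case 2
      obtain ⟨i₀, hi₀⟩ := hcase
      set K : Finset α := insert a ((L.get i₀).filter (fun x => x ≤ m i₀)) with hKdef
      have hKchain : IsChain (· ≤ ·) (K : Set α) := by
        intro x hx y hy hne
        simp only [hKdef, coe_insert, Set.mem_insert_iff, mem_coe, mem_filter] at hx hy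
        rcases hx with rfl | ⟨hxC, hxm⟩
        · rcases hy with rfl | ⟨hyC, hym⟩
          · exact absurd rfl hne
          · exact Or.inr (hym.trans hi₀)
        · rcases hy with rfl | ⟨hyC, hym⟩
          · exact Or.inl (hxm.trans hi₀)
          · exact hLchain _ (L.get_mem _) (by exact_mod_cast hxC) (by exact_mod_cast hyC) hne
      have hKsub : K ⊆ s := by
        intro x hx
        rcases mem_insert.mp hx with rfl | hx
        · exact haS
        · exact hs'sub (hLsub _ (L.get_mem _) (mem_filter.mp hx).1)
      set t : Finset α := s \ K with htdef
      have hts : t ⊂ s := by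
        refine Finset.ssubset_iff_of_subset (sdiff_subset) |>.mpr ⟨a, haS, by simp [htdef, hKdef]⟩
      obtain ⟨L'', hL''chain, hL''sub, hL''cov, hL''disj, A'', hA''sub, hA''anti, hA''card⟩ := IH t hts
      have hts' : t ⊆ s' := by
        intro x hx
        obtain ⟨hxs, hxK⟩ := mem_sdiff.mp hx
        exact mem_erase.mpr ⟨fun h => hxK (h ▸ mem_insert_self a _), hxs⟩
      -- A'' has card < k
      have hA''lt : A''.card < k := by
        have hle : A''.card ≤ k :=
          antichain_card_le_of_cover hLchain hA''anti
            (fun x hx => hLcov x (hts' (hA''sub hx)))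
        rcases lt_or_eq_of_le hle with h | h
        · exact h
        · exfalso
          obtain ⟨y, hyB, hyC, hym⟩ := hkey i₀ A'' (hA''sub.trans hts') hA''anti h
          have : y ∈ K := mem_insert.mpr (Or.inr (mem_filter.mpr ⟨hyC, hym⟩))
          exact (mem_sdiff.mp (hA''sub hyB)).2 this
      -- the new list
      refine ⟨K :: L'', ?_, ?_, ?_, ?_, A', hA'sub.trans hs'sub, hA'anti, ?_⟩
      · rintro C hC
        rcases List.mem_cons.mp hC with rfl | hC
        · exact hKchain
        · exact hL''chain _ hC
      · rintro C hC
        rcases List.mem_cons.mp hC with rfl | hC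
        · exact hKsub
        · exact (hL''sub _ hC).trans (sdiff_subset)
      · intro x hx
        by_cases hxK : x ∈ K
        · exact ⟨⟨0, by simp⟩, hxK⟩
        · obtain ⟨i, hi⟩ := hL''cov x (mem_sdiff.mpr ⟨hx, hxK⟩)
          exact ⟨⟨i.val + 1, by simpa using Nat.succ_lt_succ i.2⟩, by simpa using hi⟩
      · refine List.Pairwise.cons ?_ hL''disj
        intro C hC
        rw [Finset.disjoint_left]
        intro x hxK hxC
        exact (mem_sdiff.mp ((hL''sub _ hC) hxC)).2 hxK
      · -- A'.card = (K :: L'').length, i.e. k = L''.length + 1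
        have hcovS : ∀ x ∈ A', ∃ i : Fin (K :: L'').length, x ∈ (K :: L'').get i := by
          intro x hx
          have hxs : x ∈ s := hs'sub (hA'sub hx)
          by_cases hxK : x ∈ K
          · exact ⟨⟨0, by simp⟩, hxK⟩
          · obtain ⟨i, hi⟩ := hL''cov x (mem_sdiff.mpr ⟨hxs, hxK⟩)
            exact ⟨⟨i.val + 1, by simpa using Nat.succ_lt_succ i.2⟩, by simpa using hi⟩
        have h1 : k ≤ L''.length + 1 := by
          have := antichain_card_le_of_cover (L := K :: L'')
            (by rintro C hC
                rcases List.mem_cons.mp hC with rfl | hC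
                · exact hKchain
                · exact hL''chain _ hC) hA'anti hcovS
          simpa [hA'card] using this
        have h2 : L''.length + 1 ≤ k := by omega
        simp only [List.length_cons, hA'card]
        omega
    · -- Case 1: a incomparable with all m i
      push_neg at hcase
      have hnotle : ∀ i, ¬ a ≤ m i := by
        intro i hle
        have hne : a ≠ m i := by
          intro h; exact (mem_erase.mp (hms' i)).1 h.symm
        exact hcase i (hamax (hs'sub (hms' i)) hle)
      set Anew : Finset α := insert a (Finset.image m Finset.univ) with hAnewdef
      have haimg : a ∉ Finset.image m Finset.univ := by
        simp only [mem_image]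
        rintro ⟨i, -, h⟩
        exact (mem_erase.mp (hms' i)).1 h
      have hminj : Function.Injective m := by
        intro i j h
        by_contra hij
        exact hmne i j hij h
      have hAnewanti : IsAntichain (· ≤ ·) (Anew : Set α) := by
        intro x hx y hy hne hle
        simp only [hAnewdef, coe_insert, Set.mem_insert_iff, mem_coe, mem_image,
          mem_univ, true_and] at hx hy
        rcases hx with rfl | ⟨i, rfl⟩
        · rcases hy with rfl | ⟨j, rfl⟩
          · exact hne rfl
          · exact hnotle j hle
        · rcases hy with rfl | ⟨j, rfl⟩
          · exact hcase i hle
          · refine hpair i j ?_ hle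
            rintro rfl; exact hne rfl
      have hAnewcard : Anew.card = k + 1 := by
        rw [hAnewdef, card_insert_of_notMem haimg, card_image_of_injective _ hminj]
        simp
      refine ⟨{a} :: L, ?_, ?_, ?_, ?_, Anew, ?_, hAnewanti, by simp [hAnewcard, hkdef]⟩
      · rintro C hC
        rcases List.mem_cons.mp hC with rfl | hC
        · rw [coe_singleton]; exact Set.subsingleton_singleton.isChain
        · exact hLchain _ hC
      · rintro C hC
        rcases List.mem_cons.mp hC with rfl | hC
        · simpa using haS
        · exact (hLsub _ hC).trans hs'sub
      · intro x hx
        by_cases hxa : x = a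
        · exact ⟨⟨0, by simp⟩, by simp [hxa]⟩
        · obtain ⟨i, hi⟩ := hLcov x (mem_erase.mpr ⟨hxa, hx⟩)
          exact ⟨⟨i.val + 1, by simpa using Nat.succ_lt_succ i.2⟩, by simpa using hi⟩
      · refine List.Pairwise.cons ?_ hLdisj
        intro C hC
        rw [Finset.disjoint_left]
        intro x hxa hxC
        rw [mem_singleton] at hxa
        subst hxa
        exact (mem_erase.mp (hLsub _ hC hxC)).1 rfl
      · intro x hx
        rcases mem_insert.mp hx with rfl | hx
        · exact haS
        · obtain ⟨i, -, rfl⟩ := mem_image.mp hx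
          exact hs'sub (hms' i)


lemma card_small_powerset {α : Type*} [DecidableEq α] (C : Finset α) :
    (C.powerset.filter fun B => B.card ≤ 1).card = C.card + 1 := by
  have : (C.powerset.filter fun B => B.card ≤ 1) = insert ∅ (C.image fun x => {x}) := by
    ext B
    simp only [mem_filter, mem_powerset, mem_insert, mem_image]
    constructor
    · rintro ⟨hsub, hcard⟩
      rcases B.eq_empty_or_nonempty with rfl | ⟨x, hx⟩
      · exact Or.inl rfl
      · refine Or.inr ⟨x, hsub hx, Finset.eq_singleton_iff_unique_mem.mpr
          ⟨hx, fun y hy => card_le_one.mp hcard y hy x hx⟩ |>.symm⟩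
    · rintro (rfl | ⟨x, hx, rfl⟩)
      · simp
      · exact ⟨singleton_subset_iff.mpr hx, by simp⟩
  rw [this, card_insert_of_notMem (by simp), card_image_of_injective _ Finset.singleton_injective]


lemma fact_prod (c k : ℕ) :
    ((c + k).factorial : ℝ) = (c.factorial : ℝ) * ∏ i ∈ range k, ((c : ℝ) + 1 + i) := by
  induction k with
  | zero => simp
  | succ n ih =>
    rw [prod_range_succ, ← mul_assoc, ← ih, show c + (n+1) = (c + n) + 1 by ring,
      Nat.factorial_succ]
    push_cast
    ring

lemma amgm {r : ℕ} (hr : 1 ≤ r) (z : ℕ → ℝ) (hz : ∀ i, 0 ≤ z i) :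
    ∏ i ∈ range r, z i ≤ ((∑ i ∈ range r, z i) / r) ^ r := by
  have hr0 : (r : ℝ) ≠ 0 := by positivity
  have h := Real.geom_mean_le_arith_mean_weighted (range r) (fun _ => (r : ℝ)⁻¹) z
    (fun i _ => by positivity) (by simp [mul_inv_cancel₀ hr0]) (fun i _ => hz i)
  have hprod : ∏ i ∈ range r, z i ^ ((r : ℝ)⁻¹) = (∏ i ∈ range r, z i) ^ ((r:ℝ)⁻¹) :=
    (Real.finset_prod_rpow (range r) z (fun i _ => hz i) _)
  rw [hprod] at h
  have hsum : ∑ i ∈ range r, (r:ℝ)⁻¹ * z i = (∑ i ∈ range r, z i) / r := by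
    rw [← mul_sum]; ring
  rw [hsum] at h
  have hP : (0:ℝ) ≤ ∏ i ∈ range r, z i := prod_nonneg (fun i _ => hz i)
  have := pow_le_pow_left₀ (by positivity) h r
  rwa [← Real.rpow_natCast ((∏ i ∈ range r, z i) ^ ((r:ℝ)⁻¹)) r, ← Real.rpow_mul hP,
    inv_mul_cancel₀ hr0, Real.rpow_one] at this

lemma stepB {r c : ℕ} (hr : 1 ≤ r) (hrc : r ≤ c) :
    (((r : ℝ) + c) / r) ^ r ≤ 2 ^ r * ((mu r c : ℚ) : ℝ) := by
  rcases eq_or_lt_of_le hrc with rfl | hlt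
  · rw [mu, if_neg (lt_irrefl r)]
    have hr0 : (r : ℝ) ≠ 0 := by positivity
    rw [show ((r:ℝ) + r)/r = 2 by field_simp; ring]
    simp
  · rw [mu, if_pos hlt]
    have hr0 : (0:ℝ) < r := by positivity
    have key : ∀ i ∈ range r, ((r : ℝ) + c) / r ≤ 2 * ((c:ℝ) + 1 + i) / ((r:ℝ) + 1 + i) := by
      intro i hi
      rw [mem_range] at hi
      rw [div_le_div_iff₀ hr0 (by positivity)]
      have h1 : (i : ℝ) + 1 ≤ r := by exact_mod_cast hi
      have h2 : (r : ℝ) ≤ c := by exact_mod_cast hrc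
      nlinarith
    calc (((r : ℝ) + c) / r) ^ r = ∏ _i ∈ range r, ((r : ℝ) + c) / r := by
          rw [prod_const, card_range]
      _ ≤ ∏ i ∈ range r, 2 * ((c:ℝ) + 1 + i) / ((r:ℝ) + 1 + i) := by
          refine prod_le_prod (fun i _ => by positivity) key
      _ = 2 ^ r * ((((c:ℕ) + r).factorial * (r:ℕ).factorial : ℚ) : ℝ) /
            (((2 * r).factorial * (c:ℕ).factorial : ℚ) : ℝ) := by
          have e1 := fact_prod c r
          have e2 := fact_prod r r
          rw [prod_div_distrib, prod_mul_distrib, prod_const, card_range]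
          have hc0 : ((c.factorial : ℝ)) ≠ 0 := by positivity
          have hrf0 : ((r.factorial : ℝ)) ≠ 0 := by positivity
          have hd : (0:ℝ) < ∏ i ∈ range r, ((r:ℝ) + 1 + i) := prod_pos (fun i _ => by positivity)
          push_cast
          rw [show 2 * r = r + r from by ring, e1, e2]
          field_simp
      _ = 2 ^ r * ((((c + r).factorial * r.factorial : ℚ) / ((2*r).factorial * c.factorial : ℚ) : ℚ) : ℝ) := by
          push_cast; ring


end aux

/-- For a nonempty finite poset `P` with `c` elements, if `r` is the maximum cardinality of an
antichain of `P`, then the number of antichains of `P` (including `∅`) is at most `2^r · μ(r, c)`. -/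
theorem card_antichains_le (P : Type) [PartialOrder P] [Fintype P] [Nonempty P] (r : ℕ)
    (hr_ex : ∃ A : Finset P, IsAntichain (· ≤ ·) (A : Set P) ∧ A.card = r)
    (hr_max : ∀ A : Finset P, IsAntichain (· ≤ ·) (A : Set P) → A.card ≤ r) :
    (Nat.card {A : Finset P // IsAntichain (· ≤ ·) (A : Set P)} : ℚ) ≤
      2 ^ r * mu r (Fintype.card P) := by
  classical
  set c := Fintype.card P with hcdef
  obtain ⟨L, hLchain, hLsub, hLcov, hLdisj, W, hWsub, hWanti, hWcard⟩ :=
    dilworth (Finset.univ : Finset P)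
  set t := L.length with htdef
  have ht : t ≤ r := hWcard ▸ hr_max W hWanti
  have hr1 : 1 ≤ r := by
    have := hr_max {Classical.arbitrary P}
      (by rw [coe_singleton]; exact Set.subsingleton_singleton.isAntichain _)
    simpa using this
  have hrc : r ≤ c := by
    obtain ⟨A, hA, hAcard⟩ := hr_ex
    rw [← hAcard, hcdef]
    exact card_le_univ A
  have hdisj' : ∀ i j : Fin t, i ≠ j → Disjoint (L.get i) (L.get j) := by
    intro i j hij
    rcases lt_or_gt_of_ne hij with h | h
    · exact List.pairwise_iff_get.mp hLdisj i j h
    · exact (List.pairwise_iff_get.mp hLdisj j i h).symm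
  -- counting
  have hNat : Nat.card {A : Finset P // IsAntichain (· ≤ ·) (A : Set P)}
      = (univ.filter fun A : Finset P => IsAntichain (· ≤ ·) (A : Set P)).card := by
    rw [Nat.card_eq_fintype_card, Fintype.card_subtype]
  have hcount : (univ.filter fun A : Finset P => IsAntichain (· ≤ ·) (A : Set P)).card
      ≤ ∏ i : Fin t, ((L.get i).card + 1) := by
    have key := Finset.card_le_card_of_injOn
      (f := fun A : Finset P => fun i : Fin t => A ∩ L.get i)
      (s := univ.filter fun A : Finset P => IsAntichain (· ≤ ·) (A : Set P))
      (t := Fintype.piFinset fun i : Fin t => (L.get i).powerset.filter fun B => B.card ≤ 1)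
      (by
        intro A hA
        rw [mem_coe, mem_filter] at hA
        rw [mem_coe, Fintype.mem_piFinset]
        intro i
        rw [mem_filter, mem_powerset]
        refine ⟨inter_subset_right, ?_⟩
        rw [card_le_one]
        intro x hx y hy
        exact chain_antichain_eq (hLchain _ (L.get_mem _)) hA.2
          (mem_inter.mp hx).1 (mem_inter.mp hx).2 (mem_inter.mp hy).1 (mem_inter.mp hy).2)
      (by
        intro A _ B _ hfeq
        ext x
        have hxcov := hLcov x (mem_univ x)
        constructor
        · intro hx
          obtain ⟨i, hi⟩ := hxcov
          have hmem : x ∈ A ∩ L.get i := mem_inter.mpr ⟨hx, hi⟩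
          have heq : A ∩ L.get i = B ∩ L.get i := congrFun hfeq i
          rw [heq] at hmem
          exact (mem_inter.mp hmem).1
        · intro hx
          obtain ⟨i, hi⟩ := hxcov
          have hmem : x ∈ B ∩ L.get i := mem_inter.mpr ⟨hx, hi⟩
          have heq : A ∩ L.get i = B ∩ L.get i := congrFun hfeq i
          rw [← heq] at hmem
          exact (mem_inter.mp hmem).1)
    rw [Fintype.card_piFinset] at key
    refine key.trans (le_of_eq (prod_congr rfl fun i _ => card_small_powerset _))
  have hsum : ∑ i : Fin t, (L.get i).card = c := by
    have huniv : (Finset.univ : Finset P) = univ.biUnion (fun i : Fin t => L.get i) := by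
      ext x
      simp only [mem_univ, true_iff, mem_biUnion]
      obtain ⟨i, hi⟩ := hLcov x (mem_univ x)
      exact ⟨i, trivial, hi⟩
    rw [hcdef, ← card_univ, huniv, card_biUnion (fun i _ j _ hij => hdisj' i j hij)]
  -- pass to reals
  set d : ℕ → ℕ := fun i => (L.getD i ∅).card with hddef
  have hget : ∀ i : Fin t, (L.get i).card = d i.val := by
    intro i
    simp only [hddef]
    rw [List.getD_eq_getElem _ _ i.2]
    rfl
  set z : ℕ → ℝ := fun i => 1 + d i with hzdef
  have hz0 : ∀ i, 0 ≤ z i := fun i => by positivity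
  have hprodz : ((∏ i : Fin t, ((L.get i).card + 1) : ℕ) : ℝ) = ∏ i ∈ range r, z i := by
    push_cast
    have e1 : ∀ i : Fin t, ((L.get i).card : ℝ) + 1 = z i.val := by
      intro i
      rw [hzdef]
      rw [hget i]
      push_cast
      ring
    calc ∏ i : Fin t, (((L.get i).card : ℝ) + 1) = ∏ i : Fin t, z i.val :=
          prod_congr rfl fun i _ => e1 i
      _ = ∏ i ∈ range t, z i := Fin.prod_univ_eq_prod_range z t
      _ = ∏ i ∈ range r, z i := by
          refine prod_subset (range_subset_range.mpr ht) ?_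
          intro i _ hit
          have hti : t ≤ i := by simpa using hit
          simp only [hzdef, hddef]
          rw [List.getD_eq_default _ _ hti]
          simp
  have hsumz : ∑ i ∈ range r, z i = (r : ℝ) + c := by
    have hdt : ∑ i ∈ range r, (d i : ℝ) = c := by
      have h1 : ∑ i ∈ range t, (d i : ℝ) = ∑ i ∈ range r, (d i : ℝ) := by
        refine sum_subset (range_subset_range.mpr ht) ?_
        intro i _ hit
        have hti : t ≤ i := by simpa using hit
        simp only [hddef]
        rw [List.getD_eq_default _ _ hti]
        simp
      rw [← h1, ← Fin.sum_univ_eq_sum_range (fun i => (d i : ℝ)) t]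
      have h2 : ∀ i : Fin t, (d i.val : ℝ) = ((L.get i).card : ℝ) := by
        intro i; rw [hget i]
      calc ∑ i : Fin t, (d i.val : ℝ) = ∑ i : Fin t, ((L.get i).card : ℝ) :=
            sum_congr rfl fun i _ => h2 i
        _ = c := by rw [← Nat.cast_sum, hsum]
    simp only [hzdef]
    rw [sum_add_distrib, hdt, sum_const, card_range]
    simp
  have main : ((Nat.card {A : Finset P // IsAntichain (· ≤ ·) (A : Set P)} : ℕ) : ℝ)
      ≤ ((2 ^ r * mu r c : ℚ) : ℝ) := by
    rw [hNat]
    calc (((univ.filter fun A : Finset P => IsAntichain (· ≤ ·) (A : Set P)).card : ℕ) : ℝ)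
        ≤ ((∏ i : Fin t, ((L.get i).card + 1) : ℕ) : ℝ) := by exact_mod_cast hcount
      _ = ∏ i ∈ range r, z i := hprodz
      _ ≤ ((∑ i ∈ range r, z i) / r) ^ r := amgm hr1 z hz0
      _ = (((r : ℝ) + c) / r) ^ r := by rw [hsumz]
      _ ≤ 2 ^ r * ((mu r c : ℚ) : ℝ) := stepB hr1 hrc
      _ = ((2 ^ r * mu r c : ℚ) : ℝ) := by push_cast; ring
  exact_mod_cast main
end

section
/- Let P be a nonempty finite poset with c elements, 𝒜 its collection of antichains (including ∅), and r the maximum size of an antichain. Then |𝒜| = 2^r·μ(r, c) if and only if r = 1 or r = c. -/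
set_option linter.unusedSectionVars false

set_option linter.unusedSectionVars false

lemma amgm_nat (r : ℕ) (g : Fin r → ℕ) : (∏ i, g i) * r ^ r ≤ (∑ i, g i) ^ r := by
  rcases Nat.eq_zero_or_pos r with rfl | hr
  · simp
  have hrR : (0:ℝ) < (r:ℝ) := by exact_mod_cast hr
  have key := Real.geom_mean_le_arith_mean_weighted Finset.univ (fun _ : Fin r => 1 / r)
    (fun i => (g i : ℝ)) (fun i _ => by positivity)
    (by simp [Finset.sum_const]; field_simp) (fun i _ => by positivity)
  have h1 : ∀ i : Fin r, ((g i : ℝ) ^ (1 / (r:ℝ))) ^ (r:ℕ) = (g i : ℝ) := by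
    intro i
    rw [← Real.rpow_natCast ((g i : ℝ) ^ (1/(r:ℝ))), ← Real.rpow_mul (by positivity)]
    rw [one_div, inv_mul_cancel₀ (ne_of_gt hrR), Real.rpow_one]
  have h2 : (∏ i, (g i : ℝ)) ≤ ((∑ i, (g i : ℝ)) / r) ^ (r:ℕ) := by
    calc (∏ i, (g i : ℝ)) = (∏ i, (g i:ℝ) ^ (1/(r:ℝ))) ^ (r:ℕ) := by
          rw [← Finset.prod_pow]; exact (Finset.prod_congr rfl fun i _ => (h1 i)).symm
      _ ≤ ((∑ i, (1/(r:ℝ)) * (g i:ℝ))) ^ (r:ℕ) := by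
          apply pow_le_pow_left₀ (Finset.prod_nonneg fun i _ => Real.rpow_nonneg (by positivity) _) key
      _ = ((∑ i, (g i : ℝ)) / r) ^ (r:ℕ) := by
          rw [← Finset.mul_sum]; ring_nf
  have h3 : (∏ i, (g i : ℝ)) * r ^ r ≤ (∑ i, (g i : ℝ)) ^ r := by
    rw [div_pow] at h2
    calc (∏ i, (g i : ℝ)) * r ^ r ≤ ((∑ i, (g i : ℝ)) ^ r / (r:ℝ)^r) * r ^ r := by
          apply mul_le_mul_of_nonneg_right h2 (by positivity)
      _ = (∑ i, (g i : ℝ)) ^ r := by field_simp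
  exact_mod_cast (by push_cast at h3 ⊢; exact h3 : ((∏ i, g i) * r ^ r : ℝ) ≤ ((∑ i, g i)^r : ℝ))




lemma prod_range_factorial (n k : ℕ) : (∏ i ∈ Finset.range k, (n + 1 + i)) * n.factorial = (n + k).factorial := by
  induction k with
  | zero => simp
  | succ k ih =>
    rw [Finset.prod_range_succ, mul_right_comm, ih]
    rw [show n + (k+1) = (n + k) + 1 by ring, Nat.factorial_succ]
    ring

lemma mu_eq_prod (r c : ℕ) (h : r < c) :
    mu r c = (∏ i ∈ Finset.range r, ((c:ℚ) + 1 + i)) / (∏ i ∈ Finset.range r, ((r:ℚ) + 1 + i)) := by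
  rw [mu, if_pos h]
  have h1 : ((c + r).factorial : ℚ) = (∏ i ∈ Finset.range r, ((c:ℚ) + 1 + i)) * c.factorial := by
    rw [← prod_range_factorial c r]; push_cast; ring
  have h2 : ((2 * r).factorial : ℚ) = (∏ i ∈ Finset.range r, ((r:ℚ) + 1 + i)) * r.factorial := by
    rw [show 2 * r = r + r by ring, ← prod_range_factorial r r]; push_cast; ring
  rw [h1, h2]
  have hc : (c.factorial : ℚ) ≠ 0 := by exact_mod_cast c.factorial_ne_zero
  have hr : (r.factorial : ℚ) ≠ 0 := by exact_mod_cast r.factorial_ne_zero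
  field_simp

-- strict: (c+r)^r * ∏(r+1+i) < 2^r * ∏(c+1+i) * r^r  for 2 ≤ r < c, in ℕ
lemma strict_prod (r c : ℕ) (hr : 2 ≤ r) (hrc : r < c) :
    (c + r) ^ r * ∏ i ∈ Finset.range r, (r + 1 + i) <
      2 ^ r * (∏ i ∈ Finset.range r, (c + 1 + i)) * r ^ r := by
  have key : ∏ i ∈ Finset.range r, ((c + r) * (r + 1 + i)) <
      ∏ i ∈ Finset.range r, (2 * (c + 1 + i) * r) := by
    apply Finset.prod_lt_prod
    · intro i _; positivity
    · intro i hi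
      -- (c+r)(r+1+i) ≤ 2(c+1+i)r  ⟺ (r-(i+1))(c-r) ≥ 0
      nlinarith [Finset.mem_range.mp hi, hrc]
    · exact ⟨0, Finset.mem_range.mpr (by omega), by nlinarith [hrc, hr]⟩
  calc (c + r) ^ r * ∏ i ∈ Finset.range r, (r + 1 + i)
      = ∏ i ∈ Finset.range r, ((c + r) * (r + 1 + i)) := by
        rw [Finset.prod_mul_distrib, Finset.prod_const, Finset.card_range]
    _ < ∏ i ∈ Finset.range r, (2 * (c + 1 + i) * r) := key
    _ = 2 ^ r * (∏ i ∈ Finset.range r, (c + 1 + i)) * r ^ r := by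
        simp [Finset.prod_mul_distrib, Finset.prod_const, Finset.card_range]


variable {P : Type} [PartialOrder P] [DecidableEq P]

/-- If `𝒞` is a set of at most `r` chains covering `U`, and `A ⊆ U` is an antichain of size `r`,
then each `x ∈ A` lies in a unique chain of `𝒞`, and every chain of `𝒞` meets `A`. -/
lemma unique_chain (𝒞 : Finset (Finset P)) (r : ℕ) (h1 : 𝒞.card ≤ r)
    (h2 : ∀ C ∈ 𝒞, IsChain (· ≤ ·) (C : Set P))
    (U : Finset P) (h3 : ∀ y ∈ U, ∃ C ∈ 𝒞, y ∈ C)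
    (A : Finset P) (hAU : A ⊆ U) (hA : IsAntichain (· ≤ ·) (A : Set P)) (hcard : A.card = r) :
    (∀ x ∈ A, ∃ C ∈ 𝒞, x ∈ C ∧ ∀ C' ∈ 𝒞, x ∈ C' → C' = C) ∧ (∀ C ∈ 𝒞, ∃ x ∈ A, x ∈ C) := by
  classical
  set F : P → Finset (Finset P) := fun x => 𝒞.filter (fun C => x ∈ C) with hF
  have hFne : ∀ x ∈ A, (F x).Nonempty := by
    intro x hx
    obtain ⟨C, hC, hxC⟩ := h3 x (hAU hx)
    exact ⟨C, Finset.mem_filter.mpr ⟨hC, hxC⟩⟩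
  have hpair : ∀ x ∈ A, ∀ y ∈ A, x ≠ y → Disjoint (F x) (F y) := by
    intro x hx y hy hxy
    rw [Finset.disjoint_left]
    intro C hCx hCy
    have hC := Finset.mem_filter.mp hCx
    have hC' := Finset.mem_filter.mp hCy
    have hcomp := (h2 C hC.1).total (by exact_mod_cast hC.2) (by exact_mod_cast hC'.2)
    rcases hcomp with h | h
    · exact hA hx hy hxy h
    · exact hA hy hx (Ne.symm hxy) h
  have hbi : (A.biUnion F).card = ∑ x ∈ A, (F x).card := Finset.card_biUnion hpair
  have hsub : A.biUnion F ⊆ 𝒞 := by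
    intro C hC
    obtain ⟨x, _, hx⟩ := Finset.mem_biUnion.mp hC
    exact (Finset.mem_filter.mp hx).1
  have hsumle : ∑ x ∈ A, (F x).card ≤ r := by
    rw [← hbi]; exact le_trans (Finset.card_le_card hsub) h1
  have hone : ∀ x ∈ A, (F x).card = 1 := by
    intro x hx
    by_contra hne
    have h2le : 2 ≤ (F x).card := by
      have := Finset.card_pos.mpr (hFne x hx)
      omega
    have : ∑ y ∈ A, 1 < ∑ y ∈ A, (F y).card := by
      apply Finset.sum_lt_sum
      · intro y hy; exact Finset.card_pos.mpr (hFne y hy)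
      · exact ⟨x, hx, by omega⟩
    simp only [Finset.sum_const, smul_eq_mul, mul_one, hcard] at this
    omega
  constructor
  · intro x hx
    obtain ⟨C, hC⟩ := Finset.card_eq_one.mp (hone x hx)
    have hCF : C ∈ F x := hC ▸ Finset.mem_singleton_self C
    have hCm := Finset.mem_filter.mp hCF
    refine ⟨C, hCm.1, hCm.2, ?_⟩
    intro C' hC' hxC'
    have : C' ∈ F x := Finset.mem_filter.mpr ⟨hC', hxC'⟩
    rw [hC] at this
    exact Finset.mem_singleton.mp this
  · intro C hC
    have hsum : ∑ x ∈ A, (F x).card = r := by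
      rw [Finset.sum_congr rfl hone]; simp [hcard]
    have heq : A.biUnion F = 𝒞 := by
      apply Finset.eq_of_subset_of_card_le hsub
      rw [hbi, hsum]; exact h1
    rw [← heq] at hC
    obtain ⟨x, hx, hxC⟩ := Finset.mem_biUnion.mp hC
    exact ⟨x, hx, (Finset.mem_filter.mp hxC).2⟩

/-- **Dilworth's theorem** (cover version): if every antichain in `S` has at most `r` elements,
then `S` is covered by at most `r` chains, each contained in `S`. -/
lemma dilworth_cover (S : Finset P) : ∀ r : ℕ,
    (∀ A ⊆ S, IsAntichain (· ≤ ·) (A : Set P) → A.card ≤ r) →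
    ∃ 𝒞 : Finset (Finset P), 𝒞.card ≤ r ∧ (∀ C ∈ 𝒞, IsChain (· ≤ ·) (C : Set P)) ∧
      (∀ C ∈ 𝒞, C ⊆ S) ∧ ∀ y ∈ S, ∃ C ∈ 𝒞, y ∈ C := by
  classical
  induction S using Finset.strongInduction with
  | _ S IH =>
  intro r hw
  rcases S.eq_empty_or_nonempty with rfl | hS
  · exact ⟨∅, by simp⟩
  obtain ⟨a, haS, hamax⟩ := S.exists_maximal hS
  set T : Finset P := S.filter (fun y => y ≤ a) with hT
  have haT : a ∈ T := Finset.mem_filter.mpr ⟨haS, le_refl a⟩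
  obtain ⟨b, hbT, hbmin⟩ := T.exists_minimal ⟨a, haT⟩
  have hbS : b ∈ S := (Finset.mem_filter.mp hbT).1
  have hba : b ≤ a := (Finset.mem_filter.mp hbT).2
  have hbminS : ∀ x ∈ S, x ≤ b → x = b := by
    intro x hxS hxb
    by_contra hne
    exact hne (le_antisymm hxb (hbmin (Finset.mem_filter.mpr ⟨hxS, le_trans hxb hba⟩) hxb))
  have hr1 : 1 ≤ r := by
    have := hw {a} (Finset.singleton_subset_iff.mpr haS)
      (by rw [Finset.coe_singleton]; exact Set.subsingleton_singleton.isAntichain _)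
    simpa using this
  set S'' : Finset P := (S.erase a).erase b with hS''
  have hS''sub : S'' ⊆ S := le_trans (Finset.erase_subset _ _) (Finset.erase_subset _ _)
  have hS''ss : S'' ⊂ S := by
    refine Finset.ssubset_iff_of_subset hS''sub |>.mpr ⟨a, haS, ?_⟩
    simp [hS'']
  by_cases hcase : ∀ A ⊆ S'', IsAntichain (· ≤ ·) (A : Set P) → A.card ≤ r - 1
  · obtain ⟨𝒞, hc1, hc2, hc3, hc4⟩ := IH S'' hS''ss (r - 1) hcase
    refine ⟨insert {a, b} 𝒞, ?_, ?_, ?_, ?_⟩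
    · calc (insert ({a, b} : Finset P) 𝒞).card ≤ 𝒞.card + 1 := Finset.card_insert_le _ _
        _ ≤ (r - 1) + 1 := by omega
        _ = r := by omega
    · intro C hC
      rcases Finset.mem_insert.mp hC with rfl | hC
      · intro p hp q hq hne
        simp only [Finset.coe_insert, Finset.coe_singleton, Set.mem_insert_iff,
          Set.mem_singleton_iff] at hp hq
        rcases hp with rfl | rfl <;> rcases hq with rfl | rfl <;>
          first | exact absurd rfl hne | exact Or.inr hba | exact Or.inl hba
      · exact hc2 C hC
    · intro C hC
      rcases Finset.mem_insert.mp hC with rfl | hC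
      · intro x hx
        rcases Finset.mem_insert.mp hx with rfl | hx
        · exact haS
        · rw [Finset.mem_singleton.mp hx]; exact hbS
      · exact le_trans (hc3 C hC) hS''sub
    · intro y hyS
      by_cases hya : y = a
      · exact ⟨{a, b}, Finset.mem_insert_self _ _, by simp [hya]⟩
      by_cases hyb : y = b
      · exact ⟨{a, b}, Finset.mem_insert_self _ _, by simp [hyb]⟩
      · obtain ⟨C, hC, hyC⟩ := hc4 y (by simp [hS'', Finset.mem_erase, hya, hyb, hyS])
        exact ⟨C, Finset.mem_insert_of_mem hC, hyC⟩
  · push_neg at hcase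
    obtain ⟨A, hAsub, hAanti, hAcard⟩ := hcase
    have hAS : A ⊆ S := le_trans hAsub hS''sub
    have hAr : A.card = r := by
      have := hw A hAS hAanti
      omega
    have haA : a ∉ A := fun h => by simp [hS''] at hAsub; exact (Finset.mem_erase.mp (Finset.mem_erase.mp (hAsub h)).2).1 rfl
    have hbA : b ∉ A := fun h => (Finset.mem_erase.mp (hAsub h)).1 rfl
    set U : Finset P := S.filter (fun y => ∃ x ∈ A, x ≤ y) with hU
    set D : Finset P := S.filter (fun y => ∃ x ∈ A, y ≤ x) with hD
    have hUD : ∀ y ∈ S, y ∈ U ∨ y ∈ D := by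
      intro y hyS
      by_contra hcon
      push_neg at hcon
      simp only [hU, hD, Finset.mem_filter, not_and, not_exists] at hcon
      have h1 := hcon.1 hyS
      have h2 := hcon.2 hyS
      have hyA : y ∉ A := fun h => h1 y h (le_refl y)
      have : IsAntichain (· ≤ ·) ((insert y A : Finset P) : Set P) := by
        rw [Finset.coe_insert]
        intro p hp q hq hne hpq
        rcases Set.mem_insert_iff.mp hp with hpy | hp
        · rcases Set.mem_insert_iff.mp hq with hqy | hq
          · exact hne (hpy.trans hqy.symm)
          · exact h2 q hq (hpy ▸ hpq)
        · rcases Set.mem_insert_iff.mp hq with hqy | hq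
          · exact h1 p hp (hqy ▸ hpq)
          · exact hAanti hp hq hne hpq
      have := hw (insert y A) (Finset.insert_subset hyS hAS) this
      rw [Finset.card_insert_of_notMem hyA, hAr] at this
      omega
    have hAU : A ⊆ U := fun x hx => Finset.mem_filter.mpr ⟨hAS hx, x, hx, le_refl x⟩
    have hAD : A ⊆ D := fun x hx => Finset.mem_filter.mpr ⟨hAS hx, x, hx, le_refl x⟩
    have hUS : U ⊂ S := by
      refine Finset.ssubset_iff_of_subset (Finset.filter_subset _ _) |>.mpr ⟨b, hbS, ?_⟩
      simp only [hU, Finset.mem_filter, not_and, not_exists]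
      intro _ x hxA hxb
      exact hbA (hbminS x (hAS hxA) hxb ▸ hxA)
    have hDS : D ⊂ S := by
      refine Finset.ssubset_iff_of_subset (Finset.filter_subset _ _) |>.mpr ⟨a, haS, ?_⟩
      simp only [hD, Finset.mem_filter, not_and, not_exists]
      intro _ x hxA hax
      have : a = x := by
        by_contra hne
        exact hne (le_antisymm hax (hamax (hAS hxA) hax))
      exact haA (this ▸ hxA)
    obtain ⟨𝒞U, hU1, hU2, hU3, hU4⟩ := IH U hUS r
      (fun A' hA' h => hw A' (le_trans hA' (Finset.filter_subset _ _)) h)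
    obtain ⟨𝒞D, hD1, hD2, hD3, hD4⟩ := IH D hDS r
      (fun A' hA' h => hw A' (le_trans hA' (Finset.filter_subset _ _)) h)
    obtain ⟨hUuniq, hUall⟩ := unique_chain 𝒞U r hU1 hU2 U hU4 A hAU hAanti hAr
    obtain ⟨hDuniq, hDall⟩ := unique_chain 𝒞D r hD1 hD2 D hD4 A hAD hAanti hAr
    -- choice functions
    set cU : P → Finset P := fun x => if h : ∃ C ∈ 𝒞U, x ∈ C then h.choose else ∅ with hcU
    set cD : P → Finset P := fun x => if h : ∃ C ∈ 𝒞D, x ∈ C then h.choose else ∅ with hcD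
    have hcUspec : ∀ x ∈ A, cU x ∈ 𝒞U ∧ x ∈ cU x ∧ ∀ C ∈ 𝒞U, x ∈ C → C = cU x := by
      intro x hx
      obtain ⟨C, hC, hxC, huniq⟩ := hUuniq x hx
      have hex : ∃ C ∈ 𝒞U, x ∈ C := ⟨C, hC, hxC⟩
      have hspec := hex.choose_spec
      simp only [hcU, dif_pos hex]
      have : hex.choose = C := huniq _ hspec.1 hspec.2
      refine ⟨hspec.1, hspec.2, fun C' hC' hxC' => ?_⟩
      rw [this, huniq C' hC' hxC']
    have hcDspec : ∀ x ∈ A, cD x ∈ 𝒞D ∧ x ∈ cD x ∧ ∀ C ∈ 𝒞D, x ∈ C → C = cD x := by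
      intro x hx
      obtain ⟨C, hC, hxC, huniq⟩ := hDuniq x hx
      have hex : ∃ C ∈ 𝒞D, x ∈ C := ⟨C, hC, hxC⟩
      have hspec := hex.choose_spec
      simp only [hcD, dif_pos hex]
      have : hex.choose = C := huniq _ hspec.1 hspec.2
      refine ⟨hspec.1, hspec.2, fun C' hC' hxC' => ?_⟩
      rw [this, huniq C' hC' hxC']
    -- key comparability facts
    have hUge : ∀ x ∈ A, ∀ y ∈ cU x, x ≤ y := by
      intro x hx y hy
      obtain ⟨hC, hxC, _⟩ := hcUspec x hx
      have hyU : y ∈ U := hU3 _ hC hy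
      obtain ⟨_, x', hx', hx'y⟩ := Finset.mem_filter.mp hyU
      by_cases hxy : x = y
      · exact le_of_eq hxy
      have hcomp := (hU2 _ hC).total (by exact_mod_cast hxC) (by exact_mod_cast hy)
      rcases hcomp with h | h
      · exact h
      · -- y ≤ x, combined with x' ≤ y gives x' ≤ x, so x' = x, so y = x
        have hx'x : x' ≤ x := le_trans hx'y h
        have : x' = x := by
          by_contra hne
          exact hAanti hx' hx hne hx'x
        subst this
        exact hx'y
    have hDle : ∀ x ∈ A, ∀ y ∈ cD x, y ≤ x := by
      intro x hx y hy
      obtain ⟨hC, hxC, _⟩ := hcDspec x hx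
      have hyD : y ∈ D := hD3 _ hC hy
      obtain ⟨_, x', hx', hyx'⟩ := Finset.mem_filter.mp hyD
      by_cases hxy : x = y
      · exact le_of_eq hxy.symm
      have hcomp := (hD2 _ hC).total (by exact_mod_cast hxC) (by exact_mod_cast hy)
      rcases hcomp with h | h
      · -- x ≤ y, combined with y ≤ x' gives x ≤ x', so x = x', so y = x
        have hxx' : x ≤ x' := le_trans h hyx'
        have : x = x' := by
          by_contra hne
          exact hAanti hx hx' hne hxx'
        subst this
        exact hyx'
      · exact h
    refine ⟨A.image (fun x => cD x ∪ cU x), ?_, ?_, ?_, ?_⟩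
    · exact le_trans (Finset.card_image_le) (le_of_eq hAr)
    · intro C hC
      obtain ⟨x, hx, rfl⟩ := Finset.mem_image.mp hC
      intro p hp q hq hne
      simp only [Finset.coe_union, Set.mem_union, Finset.mem_coe] at hp hq
      have hcomp : ∀ u v : P, u ∈ cD x ∪ cU x → v ∈ cD x ∪ cU x → True := fun _ _ _ _ => trivial
      rcases hp with hp | hp <;> rcases hq with hq | hq
      · exact (hD2 _ (hcDspec x hx).1).total (by exact_mod_cast hp) (by exact_mod_cast hq)
        |>.imp id id
      · exact Or.inl (le_trans (hDle x hx p hp) (hUge x hx q hq))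
      · exact Or.inr (le_trans (hDle x hx q hq) (hUge x hx p hp))
      · exact (hU2 _ (hcUspec x hx).1).total (by exact_mod_cast hp) (by exact_mod_cast hq)
        |>.imp id id
    · intro C hC
      obtain ⟨x, hx, rfl⟩ := Finset.mem_image.mp hC
      apply Finset.union_subset
      · exact le_trans (hD3 _ (hcDspec x hx).1) (Finset.filter_subset _ _)
      · exact le_trans (hU3 _ (hcUspec x hx).1) (Finset.filter_subset _ _)
    · intro y hyS
      rcases hUD y hyS with hy | hy
      · obtain ⟨C, hC, hyC⟩ := hU4 y hy
        obtain ⟨x, hx, hxC⟩ := hUall C hC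
        have : C = cU x := (hcUspec x hx).2.2 C hC hxC
        exact ⟨cD x ∪ cU x, Finset.mem_image_of_mem _ hx,
          Finset.mem_union_right _ (this ▸ hyC)⟩
      · obtain ⟨C, hC, hyC⟩ := hD4 y hy
        obtain ⟨x, hx, hxC⟩ := hDall C hC
        have : C = cD x := (hcDspec x hx).2.2 C hC hxC
        exact ⟨cD x ∪ cU x, Finset.mem_image_of_mem _ hx,
          Finset.mem_union_left _ (this ▸ hyC)⟩

/-- Dilworth, coloring version: color elements with `r` colors so that fibers are chains. -/
lemma dilworth_coloring [Fintype P] [DecidableEq P] (r : ℕ)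
    (hw : ∀ A : Finset P, IsAntichain (· ≤ ·) (A : Set P) → A.card ≤ r) :
    ∃ h : P → Fin r, ∀ y z : P, h y = h z → y ≤ z ∨ z ≤ y := by
  classical
  obtain ⟨𝒞, h1, h2, _, h4⟩ := dilworth_cover (Finset.univ : Finset P) r
    (fun A _ hA => hw A hA)
  have hg : ∀ y : P, ∃ C : {C // C ∈ 𝒞}, y ∈ C.1 := by
    intro y
    obtain ⟨C, hC, hyC⟩ := h4 y (Finset.mem_univ y)
    exact ⟨⟨C, hC⟩, hyC⟩
  choose g hgmem using hg
  have hcard : Fintype.card {C // C ∈ 𝒞} ≤ Fintype.card (Fin r) := by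
    rw [Fintype.card_coe, Fintype.card_fin]; exact h1
  obtain ⟨ι⟩ := Function.Embedding.nonempty_of_card_le hcard
  refine ⟨fun y => ι (g y), fun y z hyz => ?_⟩
  have : g y = g z := ι.injective hyz
  by_cases hne : y = z
  · exact Or.inl (le_of_eq hne)
  · exact h2 (g y).1 (g y).2 (by exact_mod_cast hgmem y) (by rw [this]; exact_mod_cast hgmem z) hne

/-- Counting bound: the number of antichains is at most the product of (fiber size + 1). -/
lemma count_antichains_le [Fintype P] [DecidableEq P] (r : ℕ) (h : P → Fin r)
    (hch : ∀ y z : P, h y = h z → y ≤ z ∨ z ≤ y) :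
    Nat.card {A : Finset P // IsAntichain (· ≤ ·) (A : Set P)} ≤
      ∏ i : Fin r, ((Finset.univ.filter (fun y => h y = i)).card + 1) := by
  classical
  set F : Fin r → Finset P := fun i => Finset.univ.filter (fun y => h y = i) with hF
  set Φ : {A : Finset P // IsAntichain (· ≤ ·) (A : Set P)} →
      (∀ i : Fin r, Option {x // x ∈ F i}) := fun A i =>
    if hx : (A.1 ∩ F i).Nonempty then some ⟨hx.choose, (Finset.mem_inter.mp hx.choose_spec).2⟩
    else none with hΦ
  have hchoose : ∀ (A : {A : Finset P // IsAntichain (· ≤ ·) (A : Set P)}) (x : P), x ∈ A.1 →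
      ∃ hx : (A.1 ∩ F (h x)).Nonempty, hx.choose = x := by
    intro A x hxA
    have hmem : x ∈ A.1 ∩ F (h x) :=
      Finset.mem_inter.mpr ⟨hxA, Finset.mem_filter.mpr ⟨Finset.mem_univ x, rfl⟩⟩
    have hne : (A.1 ∩ F (h x)).Nonempty := ⟨x, hmem⟩
    refine ⟨hne, ?_⟩
    have hcs := hne.choose_spec
    have h1 := (Finset.mem_inter.mp hcs).1
    have h2 := (Finset.mem_filter.mp (Finset.mem_inter.mp hcs).2).2
    by_contra hne'
    rcases hch _ _ h2 with hle | hle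
    · exact A.2 (by exact_mod_cast h1) (by exact_mod_cast hxA) hne' hle
    · exact A.2 (by exact_mod_cast hxA) (by exact_mod_cast h1) (Ne.symm hne') hle
  have hinj : Function.Injective Φ := by
    intro A B hAB
    ext1
    apply Finset.Subset.antisymm <;> intro x hx
    · obtain ⟨hne, hch⟩ := hchoose A x hx
      have := congrFun hAB (h x)
      simp only [hΦ, dif_pos hne] at this
      by_cases hB : (B.1 ∩ F (h x)).Nonempty
      · rw [dif_pos hB] at this
        have := Option.some_injective _ this
        have hval : hne.choose = hB.choose := congrArg Subtype.val this
        have := (Finset.mem_inter.mp hB.choose_spec).1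
        rwa [← hval, hch] at this
      · rw [dif_neg hB] at this; exact absurd this (by simp)
    · obtain ⟨hne, hch⟩ := hchoose B x hx
      have := congrFun hAB (h x)
      simp only [hΦ, dif_pos hne] at this
      by_cases hA : (A.1 ∩ F (h x)).Nonempty
      · rw [dif_pos hA] at this
        have := Option.some_injective _ this
        have hval : hA.choose = hne.choose := congrArg Subtype.val this
        have := (Finset.mem_inter.mp hA.choose_spec).1
        rwa [hval, hch] at this
      · rw [dif_neg hA] at this; exact absurd this.symm (by simp)
  calc Nat.card {A : Finset P // IsAntichain (· ≤ ·) (A : Set P)}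
      ≤ Nat.card (∀ i : Fin r, Option {x // x ∈ F i}) := Nat.card_le_card_of_injective Φ hinj
    _ = ∏ i : Fin r, ((F i).card + 1) := by
        rw [Nat.card_eq_fintype_card, Fintype.card_pi]
        refine Finset.prod_congr rfl fun i _ => ?_
        rw [Fintype.card_option, Fintype.card_coe]

lemma count_antichains_lt [Fintype P] [DecidableEq P] (r : ℕ) (hr : 2 ≤ r)
    (hrc : r < Fintype.card P)
    (hw : ∀ A : Finset P, IsAntichain (· ≤ ·) (A : Set P) → A.card ≤ r) :
    (Nat.card {A : Finset P // IsAntichain (· ≤ ·) (A : Set P)} : ℚ) <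
      2 ^ r * mu r (Fintype.card P) := by
  classical
  set c := Fintype.card P with hc
  set N := Nat.card {A : Finset P // IsAntichain (· ≤ ·) (A : Set P)} with hN
  obtain ⟨h, hch⟩ := dilworth_coloring r hw
  set f : Fin r → ℕ := fun i => (Finset.univ.filter (fun y => h y = i)).card with hf
  have hsum : ∑ i, f i = c := by
    rw [hc, ← Finset.card_univ]
    exact ((Finset.card_eq_sum_card_fiberwise (fun x (_ : x ∈ Finset.univ) => Finset.mem_univ (h x))).trans (by rfl)).symm
  have hNle : N ≤ ∏ i, (f i + 1) := count_antichains_le r h hch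
  have hamgm : (∏ i, (f i + 1)) * r ^ r ≤ (c + r) ^ r := by
    have := amgm_nat r (fun i => f i + 1)
    rwa [Finset.sum_add_distrib, hsum, Finset.sum_const, Finset.card_univ,
      Fintype.card_fin, smul_eq_mul, mul_one] at this
  -- strict product inequality
  have hstrict := strict_prod r c hr hrc
  set A := ∏ i ∈ Finset.range r, (c + 1 + i) with hA
  set B := ∏ i ∈ Finset.range r, (r + 1 + i) with hB
  have hkey : N * B < 2 ^ r * A := by
    have h1 : N * r ^ r ≤ (c + r) ^ r :=
      le_trans (Nat.mul_le_mul_right _ hNle) hamgm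
    have h2 : N * r ^ r * B ≤ (c + r) ^ r * B := Nat.mul_le_mul_right _ h1
    have h3 : N * r ^ r * B < 2 ^ r * A * r ^ r := lt_of_le_of_lt h2 hstrict
    have hrr : 0 < r ^ r := pow_pos (by omega : 0 < r) r
    have : N * B * r ^ r < 2 ^ r * A * r ^ r := by
      calc N * B * r ^ r = N * r ^ r * B := by ring
        _ < 2 ^ r * A * r ^ r := h3
    exact Nat.lt_of_mul_lt_mul_right this
  -- convert to ℚ
  have hmu : mu r c = (A : ℚ) / B := by
    rw [mu_eq_prod r c hrc]
    push_cast [hA, hB]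
    norm_num
  have hBpos : (0:ℚ) < B := by
    have : 0 < B := Finset.prod_pos (fun i _ => by omega)
    exact_mod_cast this
  rw [hmu, ← mul_div_assoc, lt_div_iff₀ hBpos]
  exact_mod_cast hkey

/-- For a nonempty finite poset `P` with `c` elements and `r` the maximum size of an antichain,
the number of antichains equals `2^r · μ(r, c)` if and only if `r = 1` or `r = c`. -/
theorem card_antichains_eq_iff (P : Type) [PartialOrder P] [Fintype P] [Nonempty P] (r : ℕ)
    (hr_ex : ∃ A : Finset P, IsAntichain (· ≤ ·) (A : Set P) ∧ A.card = r)
    (hr_max : ∀ A : Finset P, IsAntichain (· ≤ ·) (A : Set P) → A.card ≤ r) :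
    (Nat.card {A : Finset P // IsAntichain (· ≤ ·) (A : Set P)} : ℚ) =
      2 ^ r * mu r (Fintype.card P) ↔ (r = 1 ∨ r = Fintype.card P) := by
  classical
  obtain ⟨a⟩ := ‹Nonempty P›
  have hr1 : 1 ≤ r := by
    have := hr_max {a} (by rw [Finset.coe_singleton]
                           exact Set.subsingleton_singleton.isAntichain _)
    simpa using this
  have hrc : r ≤ Fintype.card P := by
    obtain ⟨A, _, hAc⟩ := hr_ex
    rw [← hAc]
    exact le_trans (Finset.card_le_univ A) (le_of_eq (Finset.card_univ))
  constructor
  · intro heq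
    by_contra hcon
    push_neg at hcon
    obtain ⟨hne1, hnec⟩ := hcon
    have h2r : 2 ≤ r := by omega
    have hlt : r < Fintype.card P := lt_of_le_of_ne hrc hnec
    exact absurd heq (ne_of_lt (count_antichains_lt r h2r hlt hr_max))
  · rintro (rfl | hrc')
    · -- r = 1 : antichains are ∅ and singletons
      have hcount : Nat.card {A : Finset P // IsAntichain (· ≤ ·) (A : Set P)} =
          Fintype.card P + 1 := by
        let e : Option P → {A : Finset P // IsAntichain (· ≤ ·) (A : Set P)} := fun o =>
          match o with
          | none => ⟨∅, by rw [Finset.coe_empty]; exact Set.subsingleton_empty.isAntichain _⟩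
          | some x => ⟨{x}, by rw [Finset.coe_singleton]
                               exact Set.subsingleton_singleton.isAntichain _⟩
        have hbij : Function.Bijective e := by
          constructor
          · intro o1 o2 h
            match o1, o2 with
            | none, none => rfl
            | none, some x =>
              have h2 : (∅ : Finset P) = {x} := congrArg Subtype.val h
              exact absurd h2.symm (Finset.singleton_ne_empty x)
            | some x, none =>
              have h2 : ({x} : Finset P) = ∅ := congrArg Subtype.val h
              exact absurd h2 (Finset.singleton_ne_empty x)
            | some x, some y =>
              have h2 : ({x} : Finset P) = {y} := congrArg Subtype.val h
              rw [Finset.singleton_inj.mp h2]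
          · rintro ⟨A, hA⟩
            have hcard := hr_max A hA
            rcases A.eq_empty_or_nonempty with rfl | hAne
            · exact ⟨none, Subtype.ext rfl⟩
            · have : A.card = 1 := le_antisymm hcard (Finset.card_pos.mpr hAne)
              obtain ⟨x, rfl⟩ := Finset.card_eq_one.mp this
              exact ⟨some x, Subtype.ext rfl⟩
        rw [Nat.card_congr (Equiv.ofBijective e hbij).symm, Nat.card_eq_fintype_card,
          Fintype.card_option]
      rw [hcount]
      set c := Fintype.card P with hc
      have hc1 : 1 ≤ c := Fintype.card_pos
      by_cases hlt : 1 < c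
      · rw [mu, if_pos hlt]
        have : ((c + 1).factorial : ℚ) = (c + 1) * c.factorial := by
          exact_mod_cast Nat.factorial_succ c
        rw [this]
        have hfc : (c.factorial : ℚ) ≠ 0 := by exact_mod_cast c.factorial_ne_zero
        norm_num [Nat.factorial]
        field_simp
      · have : c = 1 := by omega
        rw [mu, if_neg (by omega), this]
        norm_num
    · -- r = c : all of P is an antichain
      subst hrc'
      obtain ⟨A, hA, hAc⟩ := hr_ex
      have hAuniv : A = Finset.univ := Finset.eq_univ_of_card A (hAc.trans Finset.card_univ.symm)
      subst hAuniv
      have hall : ∀ B : Finset P, IsAntichain (· ≤ ·) (B : Set P) := by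
        intro B
        exact hA.subset (by intro x _; simp)
      have hcount : Nat.card {A : Finset P // IsAntichain (· ≤ ·) (A : Set P)} =
          2 ^ Fintype.card P := by
        rw [Nat.card_congr (Equiv.subtypeUnivEquiv hall), Nat.card_eq_fintype_card,
          Fintype.card_finset]
      rw [hcount, mu, if_neg (by omega)]
      push_cast
      ring
end

section
/- Let G be a bipartite graph on {x₁,…,x_c} ⊔ {y₁,…,y_c} with x_i y_i an edge for all i, such that the associated directed graph d_G on {1,…,c} (with edge i→j iff x_i y_j is an edge of G) is a poset under reachability. Then a subset A ⊆ {1,…,c} is an antichain of d_G if and only if {x_i y_i : i ∈ A} is a set of pairwise disconnected edges of G. Consequently r(I) = max{|A| : A antichain of d_G}, where r(I) is the maximum size of a set of pairwise disconnected edges of the form considered, and in fact equals the maximum over all sets of pairwise disconnected edges. -/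
/-- Edges `vw` and `v'w'` of `G` are disconnected: there are no further edges of `G`
among the four vertices `v, w, v', w'`. -/
def EdgesDisconnected {W : Type} (G : SimpleGraph W) (v w v' w' : W) : Prop :=
  ¬G.Adj v v' ∧ ¬G.Adj v w' ∧ ¬G.Adj w v' ∧ ¬G.Adj w w'

/-- Extract the `x`-index of an edge of the bipartite graph. -/
def leftIdx {c : ℕ} : (Fin c ⊕ Fin c) × (Fin c ⊕ Fin c) → Fin c
  | (Sum.inl i, _) => i
  | (Sum.inr _, Sum.inl i) => i
  | (Sum.inr _, Sum.inr j) => j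

/-- For a Cohen–Macaulay bipartite graph `G` on `{x₁,…,x_c} ⊔ {y₁,…,y_c}` (Herzog–Hibi
conditions; `x_i = Sum.inl i`, `y_j = Sum.inr j`), with associated directed graph `d_G`
on `[c]` (edge `i→j` iff `x_i y_j ∈ E(G)`), which is a poset under reachability:
a subset `A ⊆ [c]` is an antichain of `d_G` iff `{x_i y_i : i ∈ A}` is pairwise
disconnected in `G`; and there is a set of `r` pairwise disconnected edges of `G` iff
there is an antichain of `d_G` of size `r`. -/
theorem antichain_iff_pairwise_disconnected (c : ℕ) (G : SimpleGraph (Fin c ⊕ Fin c))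
    (h1 : ∀ i, G.Adj (Sum.inl i) (Sum.inr i))
    (h2 : ∀ i j, G.Adj (Sum.inl i) (Sum.inr j) → i ≤ j)
    (h3 : ∀ i j k, G.Adj (Sum.inl i) (Sum.inr j) → G.Adj (Sum.inl j) (Sum.inr k) →
      G.Adj (Sum.inl i) (Sum.inr k))
    (hbip : ∀ i j, ¬G.Adj (Sum.inl i) (Sum.inl j) ∧ ¬G.Adj (Sum.inr i) (Sum.inr j)) :
    (∀ A : Finset (Fin c),
      IsAntichain (Relation.ReflTransGen fun i j => G.Adj (Sum.inl i) (Sum.inr j))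
          (A : Set (Fin c)) ↔
        (A : Set (Fin c)).Pairwise fun i j =>
          EdgesDisconnected G (Sum.inl i) (Sum.inr i) (Sum.inl j) (Sum.inr j)) ∧
    (∀ r : ℕ,
      (∃ B : Finset ((Fin c ⊕ Fin c) × (Fin c ⊕ Fin c)),
          B.card = r ∧ (∀ e ∈ B, G.Adj e.1 e.2) ∧
          (B : Set ((Fin c ⊕ Fin c) × (Fin c ⊕ Fin c))).Pairwise fun e f =>
            EdgesDisconnected G e.1 e.2 f.1 f.2) ↔
      (∃ A : Finset (Fin c), A.card = r ∧
        IsAntichain (Relation.ReflTransGen fun i j => G.Adj (Sum.inl i) (Sum.inr j))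
          (A : Set (Fin c)))) := by
  classical
  have hrtg : ∀ i j : Fin c,
      Relation.ReflTransGen (fun i j => G.Adj (Sum.inl i) (Sum.inr j)) i j ↔
        G.Adj (Sum.inl i) (Sum.inr j) := by
    intro i j
    constructor
    · intro h
      induction h with
      | refl => exact h1 i
      | tail _ h ih => exact h3 _ _ _ ih h
    · exact fun h => Relation.ReflTransGen.single h
  have key : ∀ A : Finset (Fin c),
      IsAntichain (Relation.ReflTransGen fun i j => G.Adj (Sum.inl i) (Sum.inr j))
          (A : Set (Fin c)) ↔
        (A : Set (Fin c)).Pairwise fun i j =>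
          EdgesDisconnected G (Sum.inl i) (Sum.inr i) (Sum.inl j) (Sum.inr j) := by
    intro A
    constructor
    · intro hA i hi j hj hij
      refine ⟨(hbip _ _).1, ?_, ?_, (hbip _ _).2⟩
      · exact fun h => hA hi hj hij ((hrtg i j).mpr h)
      · exact fun h => hA hj hi (Ne.symm hij) ((hrtg j i).mpr h.symm)
    · intro hP i hi j hj hij h
      exact (hP hi hj hij).2.1 ((hrtg i j).mp h)
  refine ⟨key, fun r => ⟨?_, ?_⟩⟩
  · rintro ⟨B, hcard, hedge, hdisc⟩
    have horient : ∀ e ∈ B, ∃ i j : Fin c, G.Adj (Sum.inl i) (Sum.inr j) ∧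
        ((e.1 = Sum.inl i ∧ e.2 = Sum.inr j) ∨ (e.1 = Sum.inr j ∧ e.2 = Sum.inl i)) := by
      rintro ⟨a | a, b | b⟩ he
      · exact absurd (hedge _ he) (hbip a b).1
      · exact ⟨a, b, hedge _ he, Or.inl ⟨rfl, rfl⟩⟩
      · exact ⟨b, a, (hedge _ he).symm, Or.inr ⟨rfl, rfl⟩⟩
      · exact absurd (hedge _ he) (hbip a b).2
    have hgval : ∀ e : (Fin c ⊕ Fin c) × (Fin c ⊕ Fin c), ∀ i j : Fin c,
        ((e.1 = Sum.inl i ∧ e.2 = Sum.inr j) ∨ (e.1 = Sum.inr j ∧ e.2 = Sum.inl i)) →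
        leftIdx e = i := by
      rintro ⟨a, b⟩ i j (⟨ha, hb⟩ | ⟨ha, hb⟩) <;> dsimp at ha hb <;> subst ha <;> subst hb <;> rfl
    have hkey : ∀ e ∈ B, ∀ f ∈ B, e ≠ f →
        leftIdx e ≠ leftIdx f ∧ ¬ G.Adj (Sum.inl (leftIdx e)) (Sum.inr (leftIdx f)) := by
      intro e he f hf hef
      obtain ⟨i, j, hij, hc1⟩ := horient e he
      obtain ⟨k, l, hkl, hc2⟩ := horient f hf
      have hno : ∀ u v, (u = e.1 ∨ u = e.2) → (v = f.1 ∨ v = f.2) → ¬ G.Adj u v := by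
        obtain ⟨d1, d2, d3, d4⟩ := hdisc he hf hef
        rintro u v (rfl | rfl) (rfl | rfl) <;> assumption
      have hxi : Sum.inl i = e.1 ∨ Sum.inl i = e.2 := by
        rcases hc1 with ⟨h, _⟩ | ⟨_, h⟩
        · exact Or.inl h.symm
        · exact Or.inr h.symm
      have hyj : Sum.inr j = e.1 ∨ Sum.inr j = e.2 := by
        rcases hc1 with ⟨_, h⟩ | ⟨h, _⟩
        · exact Or.inr h.symm
        · exact Or.inl h.symm
      have hxk : (Sum.inl k : Fin c ⊕ Fin c) = f.1 ∨ Sum.inl k = f.2 := by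
        rcases hc2 with ⟨h, _⟩ | ⟨_, h⟩
        · exact Or.inl h.symm
        · exact Or.inr h.symm
      have hyl : (Sum.inr l : Fin c ⊕ Fin c) = f.1 ∨ Sum.inr l = f.2 := by
        rcases hc2 with ⟨_, h⟩ | ⟨h, _⟩
        · exact Or.inr h.symm
        · exact Or.inl h.symm
      have hnil : ¬ G.Adj (Sum.inl i) (Sum.inr l) := hno _ _ hxi hyl
      have hnkj : ¬ G.Adj (Sum.inl k) (Sum.inr j) := fun h => hno _ _ hyj hxk h.symm
      rw [hgval e i j hc1, hgval f k l hc2]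
      constructor
      · rintro rfl
        exact hnil hkl
      · intro h
        exact hnil (h3 _ _ _ h hkl)
    refine ⟨B.image leftIdx, ?_, ?_⟩
    · rw [Finset.card_image_of_injOn, hcard]
      intro e he f hf h
      by_contra hne
      exact (hkey e he f hf hne).1 h
    · intro a ha b hb hab hrel
      simp only [Finset.coe_image, Set.mem_image, Finset.mem_coe] at ha hb
      obtain ⟨e, he, rfl⟩ := ha
      obtain ⟨f, hf, rfl⟩ := hb
      have hef : e ≠ f := fun h => hab (by rw [h])
      exact (hkey e he f hf hef).2 ((hrtg _ _).mp hrel)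
  · rintro ⟨A, hcard, hA⟩
    refine ⟨A.image (fun i => (Sum.inl i, Sum.inr i)), ?_, ?_, ?_⟩
    · rw [Finset.card_image_of_injective _ (fun i j h => by
        simpa using congrArg Prod.fst h), hcard]
    · intro e he
      simp only [Finset.mem_image] at he
      obtain ⟨i, _, rfl⟩ := he
      exact h1 i
    · have hP := (key A).mp hA
      intro e he f hf hef
      simp only [Finset.coe_image, Set.mem_image, Finset.mem_coe] at he hf
      obtain ⟨i, hi, rfl⟩ := he
      obtain ⟨j, hj, rfl⟩ := hf
      have hij : i ≠ j := fun h => hef (by rw [h])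
      exact hP hi hj hij
end

section
/- Let G be a Cohen–Macaulay bipartite graph on {x₁,…,x_c} ⊔ {y₁,…,y_c} with associated poset d_G on [c] (i ≤ j iff x_i y_j is an edge or i = j). Then there is a bijection between the antichains of d_G and the minimal vertex covers of G of size c, sending an antichain A to the vertex cover {y_j : j ⪰ i for some i ∈ A} ∪ {x_j : j ⪰̸ i for all i ∈ A}. -/
open scoped Classical

/-- `C` is a vertex cover of `G`: every edge of `G` has an endpoint in `C`. -/
def IsVertexCover {V : Type} (G : SimpleGraph V) (C : Finset V) : Prop :=
  ∀ u v, G.Adj u v → u ∈ C ∨ v ∈ C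

/-- The map sending an antichain `A` of the poset `d_G` to the vertex cover
`{y_j : j ⪰ i for some i ∈ A} ∪ {x_j : j ⪰̸ i for all i ∈ A}`, where `j ⪰ i` iff
`i = j` or `x_i y_j ∈ E(G)`. -/
noncomputable def coverOfAntichain (c : ℕ) (G : SimpleGraph (Fin c ⊕ Fin c))
    (A : Finset (Fin c)) : Finset (Fin c ⊕ Fin c) :=
  (Finset.univ.filter fun j => ∃ i ∈ A, i = j ∨ G.Adj (Sum.inl i) (Sum.inr j)).image Sum.inr ∪
  (Finset.univ.filter fun j => ∀ i ∈ A, ¬(i = j ∨ G.Adj (Sum.inl i) (Sum.inr j))).image Sum.inl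

lemma mem_cover_inr (c : ℕ) (G : SimpleGraph (Fin c ⊕ Fin c)) (A : Finset (Fin c)) (j : Fin c) :
    Sum.inr j ∈ coverOfAntichain c G A ↔ ∃ i ∈ A, i = j ∨ G.Adj (Sum.inl i) (Sum.inr j) := by
  simp [coverOfAntichain]

lemma mem_cover_inl (c : ℕ) (G : SimpleGraph (Fin c ⊕ Fin c)) (A : Finset (Fin c)) (j : Fin c) :
    Sum.inl j ∈ coverOfAntichain c G A ↔ ∀ i ∈ A, ¬(i = j ∨ G.Adj (Sum.inl i) (Sum.inr j)) := by
  simp [coverOfAntichain]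

lemma cover_card (c : ℕ) (G : SimpleGraph (Fin c ⊕ Fin c)) (A : Finset (Fin c)) :
    (coverOfAntichain c G A).card = c := by
  rw [coverOfAntichain, Finset.card_union_of_disjoint, Finset.card_image_of_injective _ Sum.inr_injective, Finset.card_image_of_injective _ Sum.inl_injective]
  · rw [show (Finset.univ.filter fun j => ∀ i ∈ A, ¬(i = j ∨ G.Adj (Sum.inl i) (Sum.inr j))) = Finset.univ.filter fun j => ¬ ∃ i ∈ A, (i = j ∨ G.Adj (Sum.inl i) (Sum.inr j)) by simp]
    rw [Finset.card_filter_add_card_filter_not]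
    simp
  · simp [Finset.disjoint_left]

/-- For a Cohen–Macaulay bipartite graph `G` on `{x₁,…,x_c} ⊔ {y₁,…,y_c}` (Herzog–Hibi
conditions; `x_i = Sum.inl i`, `y_j = Sum.inr j`), the map `coverOfAntichain` is a
bijection from the antichains of the poset `d_G` onto the minimal vertex covers of `G`
of size `c`. -/
theorem antichains_biject_minimal_covers (c : ℕ) (G : SimpleGraph (Fin c ⊕ Fin c))
    (h1 : ∀ i, G.Adj (Sum.inl i) (Sum.inr i))
    (h2 : ∀ i j, G.Adj (Sum.inl i) (Sum.inr j) → i ≤ j)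
    (h3 : ∀ i j k, G.Adj (Sum.inl i) (Sum.inr j) → G.Adj (Sum.inl j) (Sum.inr k) →
      G.Adj (Sum.inl i) (Sum.inr k))
    (hbip : ∀ i j, ¬G.Adj (Sum.inl i) (Sum.inl j) ∧ ¬G.Adj (Sum.inr i) (Sum.inr j)) :
    Set.BijOn (coverOfAntichain c G)
      {A : Finset (Fin c) |
        IsAntichain (fun i j => i = j ∨ G.Adj (Sum.inl i) (Sum.inr j)) (A : Set (Fin c))}
      {C : Finset (Fin c ⊕ Fin c) | IsVertexCover G C ∧
        (∀ C' ⊆ C, IsVertexCover G C' → C' = C) ∧ C.card = c} := by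
  set r : Fin c → Fin c → Prop := fun i j => i = j ∨ G.Adj (Sum.inl i) (Sum.inr j) with hr
  have rtrans : ∀ a b d, r a b → r b d → r a d := by
    rintro a b d (rfl | hab) (rfl | hbd)
    · exact Or.inl rfl
    · exact Or.inr hbd
    · exact Or.inr hab
    · exact Or.inr (h3 a b d hab hbd)
  have rantisymm : ∀ a b, r a b → r b a → a = b := by
    intro a b hab hba
    rcases hab with rfl | hab
    · rfl
    rcases hba with rfl | hba
    · rfl
    exact le_antisymm (h2 a b hab) (h2 b a hba)
  have rrefl : ∀ a, r a a := fun a => Or.inl rfl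
  -- membership characterizations
  have memr : ∀ A j, Sum.inr j ∈ coverOfAntichain c G A ↔ ∃ i ∈ A, r i j :=
    fun A j => mem_cover_inr c G A j
  have meml : ∀ A j, Sum.inl j ∈ coverOfAntichain c G A ↔ ¬ ∃ i ∈ A, r i j := by
    intro A j
    rw [mem_cover_inl c G A j]
    constructor
    · rintro h ⟨i, hi, hir⟩
      exact h i hi hir
    · intro h i hi hir
      exact h ⟨i, hi, hir⟩
  refine ⟨?_, ?_, ?_⟩
  · -- MapsTo
    intro A _hA
    have hcov : IsVertexCover G (coverOfAntichain c G A) := by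
      rintro (i | i) (j | j) hadj
      · exact absurd hadj (hbip i j).1
      · by_cases hp : ∃ a ∈ A, r a i
        · right
          rw [memr]
          obtain ⟨a, ha, har⟩ := hp
          exact ⟨a, ha, rtrans a i j har (Or.inr hadj)⟩
        · left; exact (meml A i).2 hp
      · by_cases hp : ∃ a ∈ A, r a j
        · left
          rw [memr]
          obtain ⟨a, ha, har⟩ := hp
          exact ⟨a, ha, rtrans a j i har (Or.inr hadj.symm)⟩
        · right; exact (meml A j).2 hp
      · exact absurd hadj (hbip i j).2
    refine ⟨hcov, ?_, cover_card c G A⟩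
    intro C' hsub hcov'
    apply Finset.Subset.antisymm hsub
    rintro (j | j) hj
    · -- inl j ∈ cover, so ¬∃ i ∈ A, r i j; use diagonal edge
      rcases hcov' (Sum.inl j) (Sum.inr j) (h1 j) with h | h
      · exact h
      · exfalso
        have hmem := hsub h
        rw [memr] at hmem
        rw [meml] at hj
        exact hj hmem
    · rw [memr] at hj
      obtain ⟨a, ha, har⟩ := hj
      have hedge : G.Adj (Sum.inl a) (Sum.inr j) := by
        rcases har with rfl | h
        · exact h1 a
        · exact h
      rcases hcov' (Sum.inl a) (Sum.inr j) hedge with h | h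
      · have := hsub h
        rw [meml] at this
        exact absurd ⟨a, ha, rrefl a⟩ this
      · exact h
  · -- InjOn
    intro A hA B hB heq
    have hiff : ∀ j, (∃ i ∈ A, r i j) ↔ (∃ i ∈ B, r i j) := by
      intro j
      rw [← memr A j, ← memr B j, heq]
    have sub : ∀ (A B : Finset (Fin c)),
        IsAntichain r (A : Set (Fin c)) →
        (∀ j, (∃ i ∈ A, r i j) ↔ (∃ i ∈ B, r i j)) → A ⊆ B := by
      intro A B hA hiff a ha
      obtain ⟨b, hb, hba⟩ := (hiff a).1 ⟨a, ha, rrefl a⟩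
      obtain ⟨a', ha', ha'b⟩ := (hiff b).2 ⟨b, hb, rrefl b⟩
      have ha'a : r a' a := rtrans a' b a ha'b hba
      have : a' = a := by
        by_contra hne
        exact hA ha' ha hne ha'a
      subst this
      have : a' = b := rantisymm a' b ha'b hba
      subst this
      exact hb
    exact Finset.Subset.antisymm (sub A B hA hiff)
      (sub B A hB fun j => (hiff j).symm)
  · -- SurjOn
    rintro C ⟨hcov, _hmin, hcard⟩
    set S : Finset (Fin c) := Finset.univ.filter fun j => Sum.inr j ∈ C with hS
    set T : Finset (Fin c) := Finset.univ.filter fun j => Sum.inl j ∈ C with hT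
    have memS : ∀ j, j ∈ S ↔ Sum.inr j ∈ C := by intro j; simp [hS]
    have memT : ∀ j, j ∈ T ↔ Sum.inl j ∈ C := by intro j; simp [hT]
    have hCeq : C = S.image Sum.inr ∪ T.image Sum.inl := by
      ext u
      rcases u with j | j
      · simp [memT j, Sum.inl_injective.eq_iff]
      · simp [memS j, Sum.inr_injective.eq_iff]
    have hcards : S.card + T.card = c := by
      have : C.card = S.card + T.card := by
        rw [hCeq, Finset.card_union_of_disjoint (by simp [Finset.disjoint_left]),
          Finset.card_image_of_injective _ Sum.inr_injective,
          Finset.card_image_of_injective _ Sum.inl_injective]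
      omega
    have hunion : S ∪ T = Finset.univ := by
      apply Finset.eq_univ_of_forall
      intro j
      rcases hcov (Sum.inl j) (Sum.inr j) (h1 j) with h | h
      · exact Finset.mem_union_right _ ((memT j).2 h)
      · exact Finset.mem_union_left _ ((memS j).2 h)
    have hdisj : ∀ j, j ∈ S → j ∉ T := by
      have h0 : (S ∩ T).card = 0 := by
        have := Finset.card_union_add_card_inter S T
        rw [hunion] at this
        simp only [Finset.card_univ, Fintype.card_fin] at this
        omega
      intro j hjS hjT
      have : j ∈ S ∩ T := Finset.mem_inter.2 ⟨hjS, hjT⟩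
      rw [Finset.card_eq_zero.1 h0] at this
      exact absurd this (Finset.notMem_empty j)
    have hcompl : ∀ j, Sum.inl j ∈ C ↔ Sum.inr j ∉ C := by
      intro j
      constructor
      · intro h h'
        exact hdisj j ((memS j).2 h') ((memT j).2 h)
      · intro h
        rcases Finset.mem_union.1 (hunion ▸ Finset.mem_univ j) with hs | ht
        · exact absurd ((memS j).1 hs) h
        · exact (memT j).1 ht
    -- S is an up-set
    have hup : ∀ j k, j ∈ S → r j k → k ∈ S := by
      intro j k hj hjk
      rcases hjk with rfl | hadj
      · exact hj
      rcases hcov (Sum.inl j) (Sum.inr k) hadj with h | h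
      · exact absurd ((memT j).2 h) (hdisj j hj)
      · exact (memS k).2 h
    set A : Finset (Fin c) := S.filter fun a => ∀ b ∈ S, r b a → b = a with hAdef
    have hAsub : A ⊆ S := Finset.filter_subset _ _
    have hAanti : IsAntichain r (A : Set (Fin c)) := by
      intro a ha b hb hne hab
      rw [Finset.mem_coe, hAdef, Finset.mem_filter] at ha hb
      exact hne (hb.2 a ha.1 hab)
    -- every element of S is above some element of A
    have key : ∀ n, ∀ j ∈ S, (j : ℕ) ≤ n → ∃ a ∈ A, r a j := by
      intro n
      induction n with
      | zero =>
        intro j hj hjn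
        by_cases hjA : ∀ b ∈ S, r b j → b = j
        · exact ⟨j, Finset.mem_filter.2 ⟨hj, hjA⟩, rrefl j⟩
        · push_neg at hjA
          obtain ⟨b, hbS, hbj, hbne⟩ := hjA
          have : (b : ℕ) < (j : ℕ) := by
            rcases hbj with rfl | hadj
            · exact absurd rfl hbne
            · exact lt_of_le_of_ne (h2 b j hadj) (fun h => hbne (Fin.ext h))
          omega
      | succ n ih =>
        intro j hj hjn
        by_cases hjA : ∀ b ∈ S, r b j → b = j
        · exact ⟨j, Finset.mem_filter.2 ⟨hj, hjA⟩, rrefl j⟩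
        · push_neg at hjA
          obtain ⟨b, hbS, hbj, hbne⟩ := hjA
          have hlt : (b : ℕ) < (j : ℕ) := by
            rcases hbj with rfl | hadj
            · exact absurd rfl hbne
            · exact lt_of_le_of_ne (h2 b j hadj) (fun h => hbne (Fin.ext h))
          obtain ⟨a, haA, hab⟩ := ih b hbS (by omega)
          exact ⟨a, haA, rtrans a b j hab hbj⟩
    have hSiff : ∀ j, (∃ a ∈ A, r a j) ↔ j ∈ S := by
      intro j
      constructor
      · rintro ⟨a, haA, haj⟩
        exact hup a j (hAsub haA) haj
      · intro hj
        exact key c j hj (le_of_lt j.isLt)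
    refine ⟨A, hAanti, ?_⟩
    ext u
    rcases u with j | j
    · rw [meml A j, hSiff j, memS j]
      exact (hcompl j).symm
    · rw [memr A j, hSiff j, memS j]
end

section
/- Let I be a square-free monomial ideal in R = k[V] and x ∈ V. If β_{l,σ}(R/(I:x)) ≠ 0 for a square-free multidegree σ, then β_{l,σ}(R/I) ≠ 0 or β_{l,σ∪{x}}(R/I) ≠ 0. Consequently M_l((I:x)) ≤ M_l(I) for all l, where M_l denotes the maximum internal degree of a nonzero Betti number in homological degree l. -/
open scoped Classical
open MvPolynomial

noncomputable section

variable (k : Type) [Field k] {V : Type} [Fintype V] [LinearOrder V]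

/-- `k`-valued chains supported on the faces of `Δ` of cardinality `c`
(so simplices of dimension `c - 1`). -/
abbrev SimplicialChain (Δ : Set (Finset V)) (c : ℤ) : Type :=
  {s : Finset V // s ∈ Δ ∧ (s.card : ℤ) = c} → k

/-- The transpose simplicial boundary map (with the usual signs), from chains on faces of
cardinality `a` to chains on faces of cardinality `b`; it is the simplicial boundary map of the
(augmented, reduced) chain complex of `Δ` when `a = b + 1`, and zero otherwise. -/
def simplicialBoundary (Δ : Set (Finset V)) (a b : ℤ) :
    SimplicialChain k Δ a →ₗ[k] SimplicialChain k Δ b where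
  toFun f t := ∑ x : V,
    if h : x ∉ t.1 ∧ insert x t.1 ∈ Δ ∧ ((insert x t.1).card : ℤ) = a then
      ((-1 : k) ^ ((t.1.filter fun y => y < x).card)) * f ⟨insert x t.1, h.2.1, h.2.2⟩
    else 0
  map_add' f g := by
    funext t
    simp only [Pi.add_apply]
    rw [← Finset.sum_add_distrib]
    refine Finset.sum_congr rfl fun x _ => ?_
    by_cases h : x ∉ t.1 ∧ insert x t.1 ∈ Δ ∧ ((insert x t.1).card : ℤ) = a
    · simp only [dif_pos h, Pi.add_apply]; ring
    · simp only [dif_neg h]; ring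
  map_smul' r f := by
    funext t
    simp only [RingHom.id_apply, Pi.smul_apply, smul_eq_mul, Finset.mul_sum]
    refine Finset.sum_congr rfl fun x _ => ?_
    by_cases h : x ∉ t.1 ∧ insert x t.1 ∈ Δ ∧ ((insert x t.1).card : ℤ) = a
    · simp only [dif_pos h, Pi.smul_apply, smul_eq_mul]; ring
    · simp only [dif_neg h]; ring

/-- The dimension over `k` of the reduced simplicial homology `H̃_d(Δ; k)`, computed as
`dim ker ∂_d − dim (im ∂_{d+1} ∩ ker ∂_d)` in the (augmented) simplicial chain complex of `Δ`
(chains of dimension `d` live on faces of cardinality `d + 1`). -/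
def reducedHomologyRank (Δ : Set (Finset V)) (d : ℤ) : ℕ :=
  Module.finrank k ↥(LinearMap.ker (simplicialBoundary k Δ (d + 1) d)) -
    Module.finrank k ↥(LinearMap.range (simplicialBoundary k Δ (d + 2) (d + 1)) ⊓
      LinearMap.ker (simplicialBoundary k Δ (d + 1) d))

/-- The Stanley–Reisner simplicial complex of a (square-free monomial) ideal `I`:
the faces are the `F ⊆ V` with `∏_{x ∈ F} x ∉ I`. -/
def srComplex (I : Ideal (MvPolynomial V k)) : Set (Finset V) :=
  {s : Finset V | (∏ x ∈ s, (X x : MvPolynomial V k)) ∉ I}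

/-- Restriction `Δ|_σ` of a simplicial complex to a vertex set `σ`. -/
def restrictComplex (Δ : Set (Finset V)) (σ : Finset V) : Set (Finset V) :=
  {s : Finset V | s ∈ Δ ∧ s ⊆ σ}

/-- The multigraded Betti number `β_{l,σ}(R/I)` of a square-free monomial ideal
`I ⊆ R = k[V]`, given by Hochster's formula:
`β_{l,σ}(R/I) = dim_k H̃_{|σ|−l−1}(Δ|_σ; k)`, where `Δ` is the Stanley–Reisner complex of `I`. -/
def multigradedBetti (I : Ideal (MvPolynomial V k)) (l : ℕ) (σ : Finset V) : ℕ :=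
  reducedHomologyRank k (restrictComplex (srComplex k I) σ) ((σ.card : ℤ) - l - 1)

/-- The graded Betti number `β_{l,j}(R/I) = ∑_{|σ| = j} β_{l,σ}(R/I)`. -/
def gradedBetti (I : Ideal (MvPolynomial V k)) (l j : ℕ) : ℕ :=
  ∑ σ ∈ (Finset.univ : Finset V).powersetCard j, multigradedBetti k I l σ

/-- `M_l(I) = max { j : β_{l,j}(R/I) ≠ 0 }`. -/
def maxShift (I : Ideal (MvPolynomial V k)) (l : ℕ) : ℕ :=
  sSup {j : ℕ | gradedBetti k I l j ≠ 0}

/-- `I` is generated by square-free monomials. -/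
def IsSquarefreeMonomialIdeal (I : Ideal (MvPolynomial V k)) : Prop :=
  ∃ 𝒢 : Set (Finset V),
    I = Ideal.span ((fun s : Finset V => ∏ x ∈ s, (X x : MvPolynomial V k)) '' 𝒢)

end


namespace BettiColonAux

open Finset

noncomputable section
set_option linter.unusedSectionVars false

variable (k : Type) [Field k] {V : Type} [Fintype V] [LinearOrder V]

def sgn (x : V) (s : Finset V) : k := (-1) ^ (s.filter fun y => y < x).card

lemma sgn_mul_self (x : V) (s : Finset V) : sgn k x s * sgn k x s = 1 := by
  rw [sgn, ← pow_add]
  exact Even.neg_one_pow ⟨_, rfl⟩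

lemma sgn_insert (x y : V) (s : Finset V) (hys : y ∉ s) :
    sgn k x (insert y s) = (if y < x then -1 else 1) * sgn k x s := by
  rw [sgn, sgn, Finset.filter_insert]
  split
  · rw [Finset.card_insert_of_notMem (fun h => hys (Finset.mem_of_mem_filter _ h)), pow_succ]
    ring
  · rw [one_mul]

lemma sgn_anticomm (x y : V) (s : Finset V) (hxy : x ≠ y) (hxs : x ∉ s) (hys : y ∉ s) :
    sgn k y (insert x s) * sgn k x (insert y s) = -(sgn k x s * sgn k y s) := by
  rw [sgn_insert k y x s hxs, sgn_insert k x y s hys]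
  rcases hxy.lt_or_gt with h | h
  · rw [if_pos h, if_neg (asymm h)]; ring
  · rw [if_neg (asymm h), if_pos h]; ring

/-- Extension by zero of chains. -/
def extMap (Λ Γ : Set (Finset V)) (a : ℤ) (f : SimplicialChain k Λ a) :
    SimplicialChain k Γ a := fun t =>
  if h : t.1 ∈ Λ then f ⟨t.1, h, t.2.2⟩ else 0

/-- Coning with the vertex `x` (transpose matrix form). -/
def coneMap (x : V) (Λ Γ : Set (Finset V)) (a _b : ℤ) (f : SimplicialChain k Λ a) :
    SimplicialChain k Γ _b := fun t =>
  if h : x ∈ t.1 ∧ t.1.erase x ∈ Λ ∧ ((t.1.erase x).card : ℤ) = a then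
    sgn k x (t.1.erase x) * f ⟨t.1.erase x, h.2⟩ else 0

/-- Extracting the `x`-part of a chain. -/
def piMap (x : V) (Γ Λ : Set (Finset V)) (a _b : ℤ) (g : SimplicialChain k Γ a) :
    SimplicialChain k Λ _b := fun s =>
  if h : insert x s.1 ∈ Γ ∧ (((insert x s.1).card : ℤ) = a) then
    sgn k x s.1 * g ⟨insert x s.1, h⟩ else 0

/-- Restriction of chains along an inclusion of complexes. -/
def resMap (Γ A : Set (Finset V)) (h : A ⊆ Γ) (a : ℤ) (g : SimplicialChain k Γ a) :
    SimplicialChain k A a := fun t => g ⟨t.1, h t.2.1, t.2.2⟩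

lemma coneMap_zero (x : V) (Λ Γ : Set (Finset V)) (a b : ℤ) :
    coneMap k x Λ Γ a b (0 : SimplicialChain k Λ a) = 0 := by
  funext t; simp only [coneMap]; split <;> simp

lemma extMap_zero (Λ Γ : Set (Finset V)) (a : ℤ) :
    extMap k Λ Γ a (0 : SimplicialChain k Λ a) = 0 := by
  funext t; simp only [extMap]; split <;> simp

lemma piMap_sub (x : V) (Γ Λ : Set (Finset V)) (a b : ℤ) (g g' : SimplicialChain k Γ a) :
    piMap k x Γ Λ a b (g - g') = piMap k x Γ Λ a b g - piMap k x Γ Λ a b g' := by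
  funext s; simp only [piMap, Pi.sub_apply]; split <;> simp [mul_sub]

lemma piMap_add (x : V) (Γ Λ : Set (Finset V)) (a b : ℤ) (g g' : SimplicialChain k Γ a) :
    piMap k x Γ Λ a b (g + g') = piMap k x Γ Λ a b g + piMap k x Γ Λ a b g' := by
  funext s; simp only [piMap, Pi.add_apply]; split <;> simp [mul_add]

lemma extMap_extMap (Λ A Γ : Set (Finset V)) (h1 : Λ ⊆ A) (a : ℤ) (f : SimplicialChain k Λ a) :
    extMap k A Γ a (extMap k Λ A a f) = extMap k Λ Γ a f := by
  funext t
  simp only [extMap]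
  by_cases h : t.1 ∈ Λ
  · rw [dif_pos (h1 h), dif_pos h]
  · rw [dif_neg h]
    split <;> rfl


lemma extMap_self (Λ : Set (Finset V)) (a : ℤ) (f : SimplicialChain k Λ a) :
    extMap k Λ Λ a f = f := by
  funext t; rw [extMap, dif_pos t.2.1]

end
end BettiColonAux
namespace BettiColonAux
noncomputable section
set_option linter.unusedSectionVars false
set_option maxHeartbeats 1000000
open Finset
variable (k : Type) [Field k] {V : Type} [Fintype V] [LinearOrder V]

lemma sgn_def (x : V) (s : Finset V) :
    (-1 : k) ^ (s.filter fun y => y < x).card = sgn k x s := rfl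

lemma cone_identity (Λ Γ : Set (Finset V)) (x : V)
    (hx : ∀ s : Finset V, x ∉ s → (s ∈ Λ ↔ insert x s ∈ Γ))
    (c a b : ℤ) (ha : a = c + 1) (hb : b = c - 1) (f : SimplicialChain k Λ c) :
    simplicialBoundary k Γ a c (coneMap k x Λ Γ c a f)
      + coneMap k x Λ Γ b c (simplicialBoundary k Λ c b f)
      = extMap k Λ Γ c f := by
  subst ha hb
  funext t
  obtain ⟨t, htΓ, htc⟩ := t
  simp only [Pi.add_apply, simplicialBoundary, LinearMap.coe_mk, AddHom.coe_mk, coneMap, extMap]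
  by_cases hxt : x ∈ t
  · -- x ∈ t
    have hxe : x ∉ t.erase x := Finset.notMem_erase x t
    have hins : insert x (t.erase x) = t := Finset.insert_erase hxt
    have h1t : 1 ≤ t.card := Finset.card_pos.mpr ⟨x, hxt⟩
    have hec : ((t.erase x).card : ℤ) = c - 1 := by
      rw [Finset.card_erase_of_mem hxt]; omega
    have heΛ : t.erase x ∈ Λ := (hx _ hxe).mpr (by rwa [hins])
    rw [dif_pos ⟨hxt, heΛ, hec⟩, Finset.mul_sum, ← Finset.sum_add_distrib,
      Finset.sum_eq_single_of_mem x (Finset.mem_univ x) ?side]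
    case side =>
      intro y _ hyx
      have hyErase : x ∉ insert y (t.erase x) := by
        simp only [Finset.mem_insert]
        rintro (h | h)
        · exact hyx h.symm
        · exact hxe h
      have her : (insert y t).erase x = insert y (t.erase x) :=
        Finset.erase_insert_of_ne hyx
      have hcomm : insert x (insert y (t.erase x)) = insert y t := by
        rw [Finset.insert_comm, hins]
      have hmem : insert y t ∈ Γ ↔ insert y (t.erase x) ∈ Λ := by
        rw [hx _ hyErase, hcomm]
      by_cases hcond : y ∉ t ∧ insert y t ∈ Γ ∧ ((insert y t).card : ℤ) = c + 1
      · obtain ⟨hyt, hyΓ, hyc⟩ := hcond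
        have hy' : y ∉ t.erase x := fun h => hyt (Finset.mem_of_mem_erase h)
        have hyΛ : insert y (t.erase x) ∈ Λ := hmem.mp hyΓ
        have hyec : ((insert y (t.erase x)).card : ℤ) = c := by
          rw [Finset.card_insert_of_notMem hy', Finset.card_erase_of_mem hxt]; omega
        have hC1 : x ∈ insert y t ∧ (insert y t).erase x ∈ Λ ∧
            (((insert y t).erase x).card : ℤ) = c :=
          ⟨Finset.mem_insert_of_mem hxt, by rw [her]; exact hyΛ, by rw [her]; exact hyec⟩
        rw [dif_pos ⟨hyt, hyΓ, hyc⟩, dif_pos hC1, dif_pos ⟨hy', hyΛ, hyec⟩]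
        have hsign := sgn_anticomm k x y (t.erase x) (fun h => hyx h.symm) hxe hy'
        rw [hins] at hsign
        have key : ∀ (p : (insert y t).erase x ∈ Λ ∧ (((insert y t).erase x).card : ℤ) = c)
            (q : insert y (t.erase x) ∈ Λ ∧ ((insert y (t.erase x)).card : ℤ) = c),
            (-1 : k) ^ (t.filter fun z => z < y).card *
              (sgn k x ((insert y t).erase x) * f ⟨(insert y t).erase x, p⟩) +
            sgn k x (t.erase x) *
              ((-1 : k) ^ ((t.erase x).filter fun z => z < y).card *
                f ⟨insert y (t.erase x), q⟩) = 0 := by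
          intro p q
          have h1 : (⟨(insert y t).erase x, p⟩ : {s // s ∈ Λ ∧ ((s.card : ℕ) : ℤ) = c})
              = ⟨insert y (t.erase x), q⟩ := Subtype.ext her
          rw [h1, her]
          simp only [sgn_def]
          linear_combination (f ⟨insert y (t.erase x), q⟩) * hsign
        exact key _ _
      · have hcond2 : ¬(y ∉ t.erase x ∧ insert y (t.erase x) ∈ Λ ∧
            ((insert y (t.erase x)).card : ℤ) = c) := by
          rintro ⟨h1, h2, h3⟩
          apply hcond
          have hyt : y ∉ t := fun hy => h1 (Finset.mem_erase.mpr ⟨hyx, hy⟩)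
          refine ⟨hyt, hmem.mpr h2, ?_⟩
          have e1 := Finset.card_insert_of_notMem hyt
          have e2 := Finset.card_insert_of_notMem h1
          have e3 := Finset.card_erase_of_mem hxt
          omega
        rw [dif_neg hcond, dif_neg hcond2]
        ring
    -- main term, x ∈ t
    have hnot : ¬(x ∉ t ∧ insert x t ∈ Γ ∧ ((insert x t).card : ℤ) = c + 1) :=
      fun h => h.1 hxt
    rw [dif_neg hnot, zero_add]
    by_cases htΛ : t ∈ Λ
    · have hcnd : x ∉ t.erase x ∧ insert x (t.erase x) ∈ Λ ∧
          ((insert x (t.erase x)).card : ℤ) = c := ⟨hxe, by rwa [hins], by rw [hins]; exact htc⟩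
      rw [dif_pos hcnd, dif_pos htΛ]
      have key : ∀ (p : insert x (t.erase x) ∈ Λ ∧ ((insert x (t.erase x)).card : ℤ) = c)
          (q : t ∈ Λ ∧ ((t.card : ℕ) : ℤ) = c),
          sgn k x (t.erase x) *
            ((-1 : k) ^ ((t.erase x).filter fun z => z < x).card *
              f ⟨insert x (t.erase x), p⟩) = f ⟨t, q⟩ := by
        intro p q
        have h1 : (⟨insert x (t.erase x), p⟩ : {s // s ∈ Λ ∧ ((s.card : ℕ) : ℤ) = c})
            = ⟨t, q⟩ := Subtype.ext hins
        rw [h1]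
        simp only [sgn_def]
        rw [← mul_assoc, sgn_mul_self, one_mul]
      exact key _ _
    · have hcnd : ¬(x ∉ t.erase x ∧ insert x (t.erase x) ∈ Λ ∧
          ((insert x (t.erase x)).card : ℤ) = c) := by
        rintro ⟨-, h2, -⟩; rw [hins] at h2; exact htΛ h2
      rw [dif_neg hcnd, dif_neg htΛ, mul_zero]
  · -- x ∉ t
    have hnot : ¬(x ∈ t ∧ t.erase x ∈ Λ ∧ ((t.erase x).card : ℤ) = c - 1) :=
      fun h => hxt h.1
    rw [dif_neg hnot, add_zero,
      Finset.sum_eq_single_of_mem x (Finset.mem_univ x) ?side2]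
    case side2 =>
      intro y _ hyx
      by_cases hcond : y ∉ t ∧ insert y t ∈ Γ ∧ ((insert y t).card : ℤ) = c + 1
      · have hni : ¬(x ∈ insert y t ∧ (insert y t).erase x ∈ Λ ∧
            (((insert y t).erase x).card : ℤ) = c) := by
          rintro ⟨h1, -, -⟩
          rcases Finset.mem_insert.mp h1 with h | h
          · exact hyx h.symm
          · exact hxt h
        rw [dif_pos hcond, dif_neg hni, mul_zero]
      · rw [dif_neg hcond]
    by_cases htΛ : t ∈ Λ
    · have hxiΓ : insert x t ∈ Γ := (hx t hxt).mp htΛ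
      have hxic : ((insert x t).card : ℤ) = c + 1 := by
        rw [Finset.card_insert_of_notMem hxt]; omega
      have hEq : (insert x t).erase x = t := Finset.erase_insert hxt
      have hC : x ∈ insert x t ∧ (insert x t).erase x ∈ Λ ∧
          (((insert x t).erase x).card : ℤ) = c :=
        ⟨Finset.mem_insert_self x t, by rw [hEq]; exact htΛ, by rw [hEq]; exact htc⟩
      rw [dif_pos ⟨hxt, hxiΓ, hxic⟩, dif_pos hC, dif_pos htΛ]
      have key : ∀ (p : (insert x t).erase x ∈ Λ ∧ (((insert x t).erase x).card : ℤ) = c)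
          (q : t ∈ Λ ∧ ((t.card : ℕ) : ℤ) = c),
          (-1 : k) ^ (t.filter fun z => z < x).card *
            (sgn k x ((insert x t).erase x) * f ⟨(insert x t).erase x, p⟩) = f ⟨t, q⟩ := by
        intro p q
        have h1 : (⟨(insert x t).erase x, p⟩ : {s // s ∈ Λ ∧ ((s.card : ℕ) : ℤ) = c})
            = ⟨t, q⟩ := Subtype.ext hEq
        rw [h1, hEq]
        simp only [sgn_def]
        rw [← mul_assoc, sgn_mul_self, one_mul]
      exact key _ _
    · have hni : ¬(x ∉ t ∧ insert x t ∈ Γ ∧ ((insert x t).card : ℤ) = c + 1) := by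
        rintro ⟨-, h2, -⟩; exact htΛ ((hx t hxt).mpr h2)
      rw [dif_neg hni, dif_neg htΛ]
end
end BettiColonAux
namespace BettiColonAux
noncomputable section
set_option linter.unusedSectionVars false
set_option maxHeartbeats 1000000
open Finset
variable (k : Type) [Field k] {V : Type} [Fintype V] [LinearOrder V]

instance (Λ : Set (Finset V)) (c : ℤ) : FiniteDimensional k (SimplicialChain k Λ c) := by
  have : Finite {s : Finset V // s ∈ Λ ∧ ((s.card : ℕ) : ℤ) = c} := Subtype.finite
  infer_instance

lemma rank_ne_zero_iff (Λ : Set (Finset V)) (d a b : ℤ) (ha : a = d + 1) (hb : b = d + 2) :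
    reducedHomologyRank k Λ d ≠ 0 ↔
      ∃ z : SimplicialChain k Λ a, simplicialBoundary k Λ a d z = 0 ∧
        z ∉ LinearMap.range (simplicialBoundary k Λ b a) := by
  subst ha hb
  rw [reducedHomologyRank]
  constructor
  · intro h
    by_contra hc
    push_neg at hc
    have hle : LinearMap.ker (simplicialBoundary k Λ (d + 1) d) ≤
        LinearMap.range (simplicialBoundary k Λ (d + 2) (d + 1)) ⊓
          LinearMap.ker (simplicialBoundary k Λ (d + 1) d) := by
      intro z hz
      exact ⟨hc z hz, hz⟩
    have : LinearMap.range (simplicialBoundary k Λ (d + 2) (d + 1)) ⊓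
        LinearMap.ker (simplicialBoundary k Λ (d + 1) d) =
        LinearMap.ker (simplicialBoundary k Λ (d + 1) d) :=
      le_antisymm inf_le_right hle
    rw [this, Nat.sub_self] at h
    exact h rfl
  · rintro ⟨z, hz, hznb⟩ h
    have hlt : LinearMap.range (simplicialBoundary k Λ (d + 2) (d + 1)) ⊓
        LinearMap.ker (simplicialBoundary k Λ (d + 1) d) <
        LinearMap.ker (simplicialBoundary k Λ (d + 1) d) :=
      lt_of_le_of_ne inf_le_right (fun he => hznb (((Submodule.ext_iff.mp he z).mpr hz).1))
    have := Submodule.finrank_lt_finrank_of_lt hlt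
    omega

lemma rank_eq_zero_of_cone (Λ : Set (Finset V)) (x : V)
    (hΛ : ∀ s : Finset V, x ∉ s → (s ∈ Λ ↔ insert x s ∈ Λ)) (d : ℤ) :
    reducedHomologyRank k Λ d = 0 := by
  by_contra h
  obtain ⟨z, hz, hznb⟩ := (rank_ne_zero_iff k Λ d (d + 1) (d + 2) rfl rfl).mp h
  apply hznb
  refine ⟨coneMap k x Λ Λ (d + 1) (d + 2) z, ?_⟩
  have hid := cone_identity k Λ Λ x hΛ (d + 1) (d + 2) d (by ring) (by ring) z
  rw [hz, coneMap_zero, add_zero, extMap_self] at hid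
  exact hid
end
end BettiColonAux
namespace BettiColonAux
noncomputable section
set_option linter.unusedSectionVars false
set_option maxHeartbeats 1000000
open Finset
variable (k : Type) [Field k] {V : Type} [Fintype V] [LinearOrder V]

lemma ext_comm (Λ Γ : Set (Finset V)) (h1 : Λ ⊆ Γ)
    (hdown : ∀ t, t ∈ Γ → t ∉ Λ → ∀ y : V, insert y t ∉ Λ)
    (a b : ℤ) (f : SimplicialChain k Λ a) :
    simplicialBoundary k Γ a b (extMap k Λ Γ a f)
      = extMap k Λ Γ b (simplicialBoundary k Λ a b f) := by
  funext t
  obtain ⟨t, htΓ, htc⟩ := t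
  simp only [simplicialBoundary, LinearMap.coe_mk, AddHom.coe_mk, extMap]
  by_cases htΛ : t ∈ Λ
  · rw [dif_pos htΛ]
    refine Finset.sum_congr rfl fun y _ => ?_
    by_cases hcond : y ∉ t ∧ insert y t ∈ Λ ∧ ((insert y t).card : ℤ) = a
    · rw [dif_pos ⟨hcond.1, h1 hcond.2.1, hcond.2.2⟩, dif_pos hcond, dif_pos hcond.2.1]
    · rw [dif_neg hcond]
      by_cases hcΓ : y ∉ t ∧ insert y t ∈ Γ ∧ ((insert y t).card : ℤ) = a
      · rw [dif_pos hcΓ]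
        have hni : insert y t ∉ Λ := fun hL => hcond ⟨hcΓ.1, hL, hcΓ.2.2⟩
        rw [dif_neg hni, mul_zero]
      · rw [dif_neg hcΓ]
  · rw [dif_neg htΛ]
    refine Finset.sum_eq_zero fun y _ => ?_
    by_cases hcΓ : y ∉ t ∧ insert y t ∈ Γ ∧ ((insert y t).card : ℤ) = a
    · rw [dif_pos hcΓ, dif_neg (hdown t htΓ htΛ y), mul_zero]
    · rw [dif_neg hcΓ]

lemma pi_ext_zero (D Γ Λ : Set (Finset V)) (x : V) (hD : ∀ s ∈ D, x ∉ s)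
    (a b : ℤ) (w : SimplicialChain k D a) :
    piMap k x Γ Λ a b (extMap k D Γ a w) = 0 := by
  funext s
  simp only [piMap, extMap, Pi.zero_apply]
  split
  · have hni : insert x s.1 ∉ D := fun h => hD _ h (Finset.mem_insert_self x s.1)
    rw [dif_neg hni, mul_zero]
  · rfl

lemma pi_cone (Λ Γ : Set (Finset V)) (x : V)
    (hΛx : ∀ s ∈ Λ, x ∉ s)
    (hx : ∀ s : Finset V, x ∉ s → (s ∈ Λ ↔ insert x s ∈ Γ))
    (c a : ℤ) (ha : a = c + 1) (f : SimplicialChain k Λ c) :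
    piMap k x Γ Λ a c (coneMap k x Λ Γ c a f) = f := by
  subst ha
  funext s
  obtain ⟨s, hsΛ, hsc⟩ := s
  have hxs : x ∉ s := hΛx s hsΛ
  have hins : insert x s ∈ Γ := (hx s hxs).mp hsΛ
  have hcard : ((insert x s).card : ℤ) = c + 1 := by
    rw [Finset.card_insert_of_notMem hxs]; omega
  simp only [piMap, coneMap]
  rw [dif_pos ⟨hins, hcard⟩]
  have hEq : (insert x s).erase x = s := Finset.erase_insert hxs
  have hC : x ∈ insert x s ∧ (insert x s).erase x ∈ Λ ∧
      (((insert x s).erase x).card : ℤ) = c :=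
    ⟨Finset.mem_insert_self x s, by rw [hEq]; exact hsΛ, by rw [hEq]; exact hsc⟩
  rw [dif_pos hC]
  have key : ∀ (p : (insert x s).erase x ∈ Λ ∧ (((insert x s).erase x).card : ℤ) = c),
      sgn k x s * (sgn k x ((insert x s).erase x) * f ⟨(insert x s).erase x, p⟩)
        = f ⟨s, hsΛ, hsc⟩ := by
    intro p
    have h1 : (⟨(insert x s).erase x, p⟩ : {u // u ∈ Λ ∧ ((u.card : ℕ) : ℤ) = c})
        = ⟨s, hsΛ, hsc⟩ := Subtype.ext hEq
    rw [h1, hEq, ← mul_assoc, sgn_mul_self, one_mul]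
  exact key _

lemma decomp (Λ A Γ : Set (Finset V)) (x : V) (h2 : A ⊆ Γ)
    (h3 : ∀ s ∈ A, x ∉ s) (h4 : ∀ t ∈ Γ, x ∉ t → t ∈ A)
    (hx : ∀ s : Finset V, x ∉ s → (s ∈ Λ ↔ insert x s ∈ Γ))
    (c b : ℤ) (hb : b = c - 1) (u : SimplicialChain k Γ c) :
    extMap k A Γ c (resMap k Γ A h2 c u) + coneMap k x Λ Γ b c (piMap k x Γ Λ c b u) = u := by
  subst hb
  funext t
  obtain ⟨t, htΓ, htc⟩ := t
  simp only [Pi.add_apply, extMap, coneMap, piMap, resMap]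
  by_cases hxt : x ∈ t
  · have htA : t ∉ A := fun h => h3 t h hxt
    rw [dif_neg htA, zero_add]
    have hxe : x ∉ t.erase x := Finset.notMem_erase x t
    have hins : insert x (t.erase x) = t := Finset.insert_erase hxt
    have heΛ : t.erase x ∈ Λ := (hx _ hxe).mpr (by rwa [hins])
    have h1t : 1 ≤ t.card := Finset.card_pos.mpr ⟨x, hxt⟩
    have hec : ((t.erase x).card : ℤ) = c - 1 := by
      rw [Finset.card_erase_of_mem hxt]; omega
    rw [dif_pos ⟨hxt, heΛ, hec⟩]
    have hC : insert x (t.erase x) ∈ Γ ∧ ((insert x (t.erase x)).card : ℤ) = c :=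
      ⟨by rwa [hins], by rw [hins]; exact htc⟩
    rw [dif_pos hC]
    have key : ∀ (p : insert x (t.erase x) ∈ Γ ∧ ((insert x (t.erase x)).card : ℤ) = c)
        (q : t ∈ Γ ∧ ((t.card : ℕ) : ℤ) = c),
        sgn k x (t.erase x) * (sgn k x (t.erase x) * u ⟨insert x (t.erase x), p⟩) = u ⟨t, q⟩ := by
      intro p q
      have h1 : (⟨insert x (t.erase x), p⟩ : {s // s ∈ Γ ∧ ((s.card : ℕ) : ℤ) = c})
          = ⟨t, q⟩ := Subtype.ext hins
      rw [h1, ← mul_assoc, sgn_mul_self, one_mul]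
    exact key _ _
  · have htA : t ∈ A := h4 t htΓ hxt
    rw [dif_pos htA]
    have hni : ¬(x ∈ t ∧ t.erase x ∈ Λ ∧ ((t.erase x).card : ℤ) = c - 1) := fun h => hxt h.1
    rw [dif_neg hni, add_zero]

lemma homology_transfer (Λ A Γ : Set (Finset V)) (x : V)
    (h1 : Λ ⊆ A) (h2 : A ⊆ Γ)
    (h3 : ∀ s ∈ A, x ∉ s) (h4 : ∀ t ∈ Γ, x ∉ t → t ∈ A)
    (h5 : ∀ s : Finset V, x ∉ s → (s ∈ Λ ↔ insert x s ∈ Γ))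
    (h6 : ∀ s t : Finset V, s ⊆ t → t ∈ Λ → s ∈ Λ)
    (d : ℤ) (h : reducedHomologyRank k Λ d ≠ 0) :
    reducedHomologyRank k A d ≠ 0 ∨ reducedHomologyRank k Γ (d + 1) ≠ 0 := by
  have hΛx : ∀ s ∈ Λ, x ∉ s := fun s hs => h3 s (h1 hs)
  have hdownΛ : ∀ t, t ∈ A → t ∉ Λ → ∀ y : V, insert y t ∉ Λ :=
    fun t _ htΛ y hins => htΛ (h6 t (insert y t) (Finset.subset_insert y t) hins)
  have hdownA : ∀ t, t ∈ Γ → t ∉ A → ∀ y : V, insert y t ∉ A := by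
    intro t htΓ htA y hins
    have hxt : x ∈ t := by
      by_contra hx'; exact htA (h4 t htΓ hx')
    exact h3 _ hins (Finset.mem_insert_of_mem hxt)
  obtain ⟨z, hz, hznb⟩ := (rank_ne_zero_iff k Λ d (d+1) (d+2) rfl rfl).mp h
  by_cases hA : extMap k Λ A (d+1) z ∈
      LinearMap.range (simplicialBoundary k A (d+2) (d+1))
  · right
    obtain ⟨w, hw⟩ := hA
    rw [rank_ne_zero_iff k Γ (d+1) (d+2) (d+3) (by ring) (by ring)]
    refine ⟨extMap k A Γ (d+2) w - coneMap k x Λ Γ (d+1) (d+2) z, ?_, ?_⟩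
    · rw [map_sub]
      have e2 := cone_identity k Λ Γ x h5 (d+1) (d+2) d (by ring) (by ring) z
      rw [hz, coneMap_zero, add_zero] at e2
      rw [ext_comm k A Γ h2 hdownA (d+2) (d+1) w, e2, hw,
        extMap_extMap k Λ A Γ h1, sub_self]
    · rintro ⟨u, hu⟩
      apply hznb
      have hπc : piMap k x Γ Λ (d+2) (d+1)
          (extMap k A Γ (d+2) w - coneMap k x Λ Γ (d+1) (d+2) z) = -z := by
        rw [piMap_sub, pi_ext_zero k A Γ Λ x h3 (d+2) (d+1) w,
          pi_cone k Λ Γ x hΛx h5 (d+1) (d+2) (by ring) z, zero_sub]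
      have hdec := decomp k Λ A Γ x h2 h3 h4 h5 (d+3) (d+2) (by ring) u
      have e3 : piMap k x Γ Λ (d+2) (d+1) (simplicialBoundary k Γ (d+3) (d+2) u)
          = - simplicialBoundary k Λ (d+2) (d+1) (piMap k x Γ Λ (d+3) (d+2) u) := by
        conv_lhs => rw [← hdec]
        rw [map_add, piMap_add,
          ext_comm k A Γ h2 hdownA (d+3) (d+2) (resMap k Γ A h2 (d+3) u),
          pi_ext_zero k A Γ Λ x h3 (d+2) (d+1) _, zero_add]
        have e4 := cone_identity k Λ Γ x h5 (d+2) (d+3) (d+1) (by ring) (by ring)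
          (piMap k x Γ Λ (d+3) (d+2) u)
        have e5 := eq_sub_of_add_eq e4
        rw [e5, piMap_sub, pi_ext_zero k Λ Γ Λ x hΛx (d+2) (d+1) _,
          pi_cone k Λ Γ x hΛx h5 (d+1) (d+2) (by ring) _, zero_sub]
      rw [hu, hπc] at e3
      exact ⟨piMap k x Γ Λ (d+3) (d+2) u, neg_inj.mp e3.symm⟩
  · left
    rw [rank_ne_zero_iff k A d (d+1) (d+2) rfl rfl]
    refine ⟨extMap k Λ A (d+1) z, ?_, hA⟩
    rw [ext_comm k Λ A h1 hdownΛ (d+1) d z, hz, extMap_zero]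
end
end BettiColonAux
namespace BettiColonAux
noncomputable section
set_option linter.unusedSectionVars false
set_option maxHeartbeats 1000000
open Finset MvPolynomial
variable (k : Type) [Field k] {V : Type} [Fintype V] [LinearOrder V]

lemma prod_X_eq_monomial (s : Finset V) :
    ∏ y ∈ s, (X y : MvPolynomial V k)
      = monomial (∑ y ∈ s, Finsupp.single y 1) (1 : k) := by
  induction s using Finset.cons_induction with
  | empty => simp
  | cons a s ha ih =>
    rw [Finset.prod_cons, Finset.sum_cons, ih, ← pow_one (X a : MvPolynomial V k),
      X_pow_eq_monomial, monomial_mul, one_mul]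

lemma indicator_apply (u : Finset V) (z : V) :
    (∑ y ∈ u, Finsupp.single y (1 : ℕ)) z = if z ∈ u then 1 else 0 := by
  rw [Finset.sum_apply']
  simp [Finsupp.single_apply]

/-- The square-freeness step: if `X x ^ 2 * m ∈ I` for a square-free monomial `m` not involving
`x`, then already `X x * m ∈ I`. -/
lemma squarefree_step (𝒢 : Set (Finset V)) (s : Finset V) (x : V) (hxs : x ∉ s)
    (h : (X x : MvPolynomial V k) * ((X x : MvPolynomial V k) * ∏ y ∈ s, X y) ∈
      Ideal.span ((fun s : Finset V => ∏ y ∈ s, (X y : MvPolynomial V k)) '' 𝒢)) :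
    (X x : MvPolynomial V k) * ∏ y ∈ s, X y ∈
      Ideal.span ((fun s : Finset V => ∏ y ∈ s, (X y : MvPolynomial V k)) '' 𝒢) := by
  have himg : ((fun s : Finset V => ∏ y ∈ s, (X y : MvPolynomial V k)) '' 𝒢)
      = ((fun m => monomial m (1 : k)) ''
          ((fun s : Finset V => ∑ y ∈ s, Finsupp.single y (1 : ℕ)) '' 𝒢)) := by
    rw [Set.image_image]
    exact Set.image_congr fun u _ => prod_X_eq_monomial k u
  have hmon : ∀ (u : V →₀ ℕ), (X x : MvPolynomial V k) * monomial u 1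
      = monomial (Finsupp.single x 1 + u) 1 := by
    intro u
    rw [← pow_one (X x : MvPolynomial V k), X_pow_eq_monomial, monomial_mul, one_mul]
  rw [prod_X_eq_monomial k s, hmon, hmon] at h
  rw [prod_X_eq_monomial k s, hmon]
  rw [himg] at h ⊢
  rw [mem_ideal_span_monomial_image] at h ⊢
  intro m hm
  rw [support_monomial, if_neg (one_ne_zero : (1:k) ≠ 0), Finset.mem_singleton] at hm
  subst hm
  have hkey := h (Finsupp.single x 1 + (Finsupp.single x 1 + ∑ y ∈ s, Finsupp.single y 1))
    (by rw [support_monomial, if_neg (one_ne_zero : (1:k) ≠ 0)]; exact Finset.mem_singleton_self _)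
  obtain ⟨v, hv𝒢, hvle⟩ := hkey
  refine ⟨v, hv𝒢, ?_⟩
  obtain ⟨g, hg𝒢, rfl⟩ := hv𝒢
  rw [Finsupp.le_def] at hvle ⊢
  intro z
  have h1 := hvle z
  have h2 := indicator_apply g z
  have h3 := indicator_apply s z
  simp only [Finsupp.add_apply, Finsupp.single_apply] at h1 ⊢
  rw [h2] at h1 ⊢
  rw [h3] at h1 ⊢
  by_cases hzx : x = z <;> by_cases hzs : z ∈ s <;> by_cases hzg : z ∈ g <;>
    simp_all <;> omega
end
end BettiColonAux

namespace BettiColonAux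
noncomputable section
set_option linter.unusedSectionVars false
set_option maxHeartbeats 1000000
open Finset MvPolynomial
variable (k : Type) [Field k] {V : Type} [Fintype V] [LinearOrder V]

lemma mem_srComplex_colon (I : Ideal (MvPolynomial V k)) (x : V) (s : Finset V) :
    s ∈ srComplex k (I.colon (Ideal.span {(X x : MvPolynomial V k)})) ↔
      (X x : MvPolynomial V k) * ∏ y ∈ s, X y ∉ I := by
  rw [mul_comm]
  exact not_congr Ideal.mem_colon_span_singleton

lemma prod_mem_mono (I : Ideal (MvPolynomial V k)) {s t : Finset V} (hst : s ⊆ t)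
    (p : MvPolynomial V k) (h : p * ∏ y ∈ s, X y ∈ I) : p * ∏ y ∈ t, X y ∈ I := by
  rw [← Finset.prod_sdiff hst]
  have e : p * ((∏ y ∈ t \ s, (X y : MvPolynomial V k)) * ∏ y ∈ s, X y)
      = (∏ y ∈ t \ s, (X y : MvPolynomial V k)) * (p * ∏ y ∈ s, X y) := by ring
  rw [e]
  exact Ideal.mul_mem_left _ _ h

lemma prod_mem_mono' (I : Ideal (MvPolynomial V k)) {s t : Finset V} (hst : s ⊆ t)
    (h : ∏ y ∈ s, (X y : MvPolynomial V k) ∈ I) : ∏ y ∈ t, (X y : MvPolynomial V k) ∈ I := by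
  have := prod_mem_mono k I hst 1 (by rwa [one_mul])
  rwa [one_mul] at this
end
end BettiColonAux


/-- Let `I` be a square-free monomial ideal in `R = k[V]` and `x ∈ V`. If
`β_{l,σ}(R/(I:x)) ≠ 0` for a square-free multidegree `σ`, then `β_{l,σ}(R/I) ≠ 0` or
`β_{l,σ∪{x}}(R/I) ≠ 0`. Consequently `M_l((I:x)) ≤ M_l(I)` for all `l`. -/
theorem betti_colon (k : Type) [Field k] (V : Type) [Fintype V] [LinearOrder V]
    (I : Ideal (MvPolynomial V k)) (hI : IsSquarefreeMonomialIdeal k I) (x : V) :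
    (∀ (l : ℕ) (σ : Finset V),
      multigradedBetti k (I.colon (Ideal.span {(X x : MvPolynomial V k)})) l σ ≠ 0 →
        multigradedBetti k I l σ ≠ 0 ∨ multigradedBetti k I l (insert x σ) ≠ 0) ∧
    (∀ l : ℕ, maxShift k (I.colon (Ideal.span {(X x : MvPolynomial V k)})) l ≤
      maxShift k I l) := by
  classical
  obtain ⟨𝒢, h𝒢⟩ := hI
  have hJ : ∀ s : Finset V, s ∈ srComplex k (I.colon (Ideal.span {(X x : MvPolynomial V k)}))
      ↔ (X x : MvPolynomial V k) * ∏ y ∈ s, X y ∉ I :=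
    BettiColonAux.mem_srComplex_colon k I x
  have hsq : ∀ s : Finset V, x ∉ s →
      ((X x : MvPolynomial V k) * ∏ y ∈ s, X y ∈ I ↔
        (X x : MvPolynomial V k) * ∏ y ∈ insert x s, X y ∈ I) := by
    intro s hxs
    rw [Finset.prod_insert hxs]
    constructor
    · intro h
      exact Ideal.mul_mem_left _ _ h
    · intro h
      rw [h𝒢] at h ⊢
      exact BettiColonAux.squarefree_step k 𝒢 s x hxs h
  have main : ∀ (l : ℕ) (σ : Finset V),
      multigradedBetti k (I.colon (Ideal.span {(X x : MvPolynomial V k)})) l σ ≠ 0 →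
        multigradedBetti k I l σ ≠ 0 ∨ multigradedBetti k I l (insert x σ) ≠ 0 := by
    intro l σ hβ
    by_cases hxσ : x ∈ σ
    · exfalso
      apply hβ
      rw [multigradedBetti]
      apply BettiColonAux.rank_eq_zero_of_cone k _ x
      intro s hxs
      show (s ∈ srComplex k (I.colon (Ideal.span {(X x : MvPolynomial V k)})) ∧ s ⊆ σ) ↔
        (insert x s ∈ srComplex k (I.colon (Ideal.span {(X x : MvPolynomial V k)})) ∧
          insert x s ⊆ σ)
      rw [hJ s, hJ (insert x s), ← hsq s hxs]
      exact and_congr Iff.rfl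
        ⟨fun h => Finset.insert_subset hxσ h, fun h => (Finset.subset_insert x s).trans h⟩
    · -- x ∉ σ
      rw [multigradedBetti] at hβ
      have htrans := BettiColonAux.homology_transfer k
        (restrictComplex (srComplex k (I.colon (Ideal.span {(X x : MvPolynomial V k)}))) σ)
        (restrictComplex (srComplex k I) σ)
        (restrictComplex (srComplex k I) (insert x σ)) x
        ?h1 ?h2 ?h3 ?h4 ?h5 ?h6 ((σ.card : ℤ) - l - 1) hβ
      case h1 =>
        rintro s ⟨hs1, hs2⟩
        refine ⟨fun hm => ?_, hs2⟩
        exact (hJ s).mp hs1 (Ideal.mul_mem_left _ _ hm)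
      case h2 =>
        rintro s ⟨hs1, hs2⟩
        exact ⟨hs1, hs2.trans (Finset.subset_insert x σ)⟩
      case h3 =>
        rintro s ⟨hs1, hs2⟩ hxs
        exact hxσ (hs2 hxs)
      case h4 =>
        rintro t ⟨ht1, ht2⟩ hxt
        exact ⟨ht1, (Finset.subset_insert_iff_of_notMem hxt).mp ht2⟩
      case h5 =>
        intro s hxs
        show (s ∈ srComplex k (I.colon (Ideal.span {(X x : MvPolynomial V k)})) ∧ s ⊆ σ) ↔
          (insert x s ∈ srComplex k I ∧ insert x s ⊆ insert x σ)
        rw [hJ s]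
        have hsr : insert x s ∈ srComplex k I ↔
            (X x : MvPolynomial V k) * ∏ y ∈ s, X y ∉ I := by
          rw [srComplex, Set.mem_setOf_eq, Finset.prod_insert hxs]
        rw [hsr]
        refine and_congr Iff.rfl ⟨fun h => Finset.insert_subset_insert x h, fun h y hy => ?_⟩
        have := h (Finset.mem_insert_of_mem hy)
        rcases Finset.mem_insert.mp this with h' | h'
        · exact absurd (h' ▸ hy) hxs
        · exact h'
      case h6 =>
        rintro s t hst ⟨ht1, ht2⟩
        exact ⟨fun hm => ht1 (BettiColonAux.prod_mem_mono' k _ hst hm), hst.trans ht2⟩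
      rcases htrans with h | h
      · left
        rw [multigradedBetti]
        exact h
      · right
        rw [multigradedBetti]
        have e : ((insert x σ).card : ℤ) - l - 1 = ((σ.card : ℤ) - l - 1) + 1 := by
          rw [Finset.card_insert_of_notMem hxσ]
          push_cast
          ring
        rw [e]
        exact h
  refine ⟨main, ?_⟩
  intro l
  have hbdd : BddAbove {j : ℕ | gradedBetti k I l j ≠ 0} := by
    refine ⟨Fintype.card V, fun j hj => ?_⟩
    by_contra hc
    push_neg at hc
    apply hj
    rw [gradedBetti, Finset.powersetCard_eq_empty.mpr (by rwa [Finset.card_univ]),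
      Finset.sum_empty]
  by_cases hne : {j : ℕ | gradedBetti k
      (I.colon (Ideal.span {(X x : MvPolynomial V k)})) l j ≠ 0}.Nonempty
  · rw [maxShift]
    apply csSup_le hne
    intro j hj
    rw [Set.mem_setOf_eq, gradedBetti] at hj
    obtain ⟨σ, hσmem, hσ⟩ : ∃ σ ∈ Finset.powersetCard j (Finset.univ : Finset V),
        multigradedBetti k (I.colon (Ideal.span {(X x : MvPolynomial V k)})) l σ ≠ 0 := by
      by_contra hc
      push_neg at hc
      exact hj (Finset.sum_eq_zero hc)
    have hcard : σ.card = j := Finset.mem_powersetCard_univ.mp hσmem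
    rcases main l σ hσ with h | h
    · apply le_csSup hbdd
      rw [Set.mem_setOf_eq, gradedBetti]
      intro h0
      exact h (Finset.sum_eq_zero_iff.mp h0 σ
        (Finset.mem_powersetCard_univ.mpr hcard))
    · have hle : j ≤ (insert x σ).card := by
        rw [← hcard]
        exact Finset.card_le_card (Finset.subset_insert x σ)
      refine hle.trans ((le_csSup hbdd ?_ : (insert x σ).card ≤ maxShift k I l))
      rw [Set.mem_setOf_eq, gradedBetti]
      intro h0
      exact h (Finset.sum_eq_zero_iff.mp h0 (insert x σ)
        (Finset.mem_powersetCard_univ.mpr rfl))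
  · rw [Set.not_nonempty_iff_eq_empty] at hne
    rw [maxShift, hne, csSup_empty]
    exact Nat.zero_le _
end

section
/- Let G be a bipartite graph on V₁ ⊔ V₂ with edge ideal I of height c, such that for every vertex x, height(I, x) = c. Then for every vertex x, height(I : x) = c as well. -/
/-- Hall-type auxiliary lemma: given a minimum vertex cover `C` of a bipartite graph,
the vertices of `C` on side `V₁` can be matched injectively to neighbours on side `V₂`
lying outside `C`. -/
lemma aux_hall {V : Type} [Fintype V] [DecidableEq V] (G : SimpleGraph V)
    (V₁ V₂ : Finset V)
    (hbip : ∀ u v, G.Adj u v → (u ∈ V₁ ∧ v ∈ V₂) ∨ (u ∈ V₂ ∧ v ∈ V₁))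
    (hdisj : ∀ v, v ∈ V₁ → v ∉ V₂)
    (c : ℕ) (C : Finset V) (hC : IsVertexCover G C) (hCc : C.card = c)
    (hcmin : ∀ D : Finset V, IsVertexCover G D → c ≤ D.card) :
    ∃ f : {x : V // x ∈ C ∩ V₁} → V, Function.Injective f ∧
      ∀ x : {x : V // x ∈ C ∩ V₁}, G.Adj ↑x (f x) ∧ f x ∈ V₂ ∧ f x ∉ C := by
  classical
  set t : {x : V // x ∈ C ∩ V₁} → Finset V :=
    fun x => (V₂ \ C).filter (fun w => G.Adj ↑x w) with ht
  have hall : ∀ s : Finset {x : V // x ∈ C ∩ V₁}, s.card ≤ (s.biUnion t).card := by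
    intro s
    by_contra hlt
    push_neg at hlt
    set S : Finset V := s.image Subtype.val with hS
    set T : Finset V := s.biUnion t with hT
    have hScard : S.card = s.card := Finset.card_image_of_injective s Subtype.val_injective
    have hSsub : S ⊆ C := by
      intro v hv
      rw [hS, Finset.mem_image] at hv
      obtain ⟨x, _, rfl⟩ := hv
      exact (Finset.mem_inter.mp x.2).1
    have hSV₁ : S ⊆ V₁ := by
      intro v hv
      rw [hS, Finset.mem_image] at hv
      obtain ⟨x, _, rfl⟩ := hv
      exact (Finset.mem_inter.mp x.2).2
    have hTsub : T ⊆ V₂ \ C := by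
      intro v hv
      rw [hT, Finset.mem_biUnion] at hv
      obtain ⟨x, _, hx⟩ := hv
      exact (Finset.mem_filter.mp hx).1
    set C' : Finset V := (C \ S) ∪ T with hC'
    have key : ∀ u v, G.Adj u v → u ∈ V₁ → v ∈ V₂ → u ∈ C' ∨ v ∈ C' := by
      intro u v huv hu hv
      have hvS : v ∉ S := fun h => hdisj v (hSV₁ h) hv
      by_cases huS : u ∈ S
      · -- u ∈ S; either v ∈ C (then v ∈ C \ S) or v ∈ T
        by_cases hvC : v ∈ C
        · exact Or.inr (Finset.mem_union_left _ (Finset.mem_sdiff.mpr ⟨hvC, hvS⟩))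
        · right
          apply Finset.mem_union_right
          rw [hS, Finset.mem_image] at huS
          obtain ⟨x, hxs, hxu⟩ := huS
          rw [hT, Finset.mem_biUnion]
          refine ⟨x, hxs, ?_⟩
          rw [ht]
          exact Finset.mem_filter.mpr ⟨Finset.mem_sdiff.mpr ⟨hv, hvC⟩, by rw [hxu]; exact huv⟩
      · rcases hC u v huv with huC | hvC
        · exact Or.inl (Finset.mem_union_left _ (Finset.mem_sdiff.mpr ⟨huC, huS⟩))
        · exact Or.inr (Finset.mem_union_left _ (Finset.mem_sdiff.mpr ⟨hvC, hvS⟩))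
    have hcov : IsVertexCover G C' := by
      intro u v huv
      rcases hbip u v huv with ⟨h1, h2⟩ | ⟨h1, h2⟩
      · exact key u v huv h1 h2
      · exact (key v u huv.symm h2 h1).symm
    have hge := hcmin C' hcov
    have hcard : C'.card ≤ (C \ S).card + T.card := Finset.card_union_le _ _
    have hCS : (C \ S).card = C.card - S.card := Finset.card_sdiff_of_subset hSsub
    have hSle : S.card ≤ C.card := Finset.card_le_card hSsub
    omega
  obtain ⟨f, hfinj, hf⟩ := (Finset.all_card_le_biUnion_card_iff_exists_injective t).mp hall
  refine ⟨f, hfinj, fun x => ?_⟩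
  have := hf x
  rw [ht, Finset.mem_filter, Finset.mem_sdiff] at this
  exact ⟨this.2, this.1.1, this.1.2⟩

/-- Let `G` be a bipartite graph on `V₁ ⊔ V₂` without isolated vertices, with edge ideal `I` of
height `c` (i.e. minimum vertex-cover size `c`). If `height (I, x) = c` for every vertex `x`
(i.e. every vertex lies in some vertex cover of size `c`), then `height (I : x) = c` for every
vertex `x` as well (i.e. every vertex `x` is omitted by some vertex cover of size `c` — such a
cover necessarily contains all neighbours of `x`); moreover `|V₁| = |V₂| = c`. -/
theorem colon_height_eq (V : Type) [Fintype V] [DecidableEq V] (G : SimpleGraph V)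
    (V₁ V₂ : Finset V)
    (hpart : ∀ v : V, (v ∈ V₁ ∧ v ∉ V₂) ∨ (v ∈ V₂ ∧ v ∉ V₁))
    (hbip : ∀ u v, G.Adj u v → (u ∈ V₁ ∧ v ∈ V₂) ∨ (u ∈ V₂ ∧ v ∈ V₁))
    (hniso : ∀ v : V, ∃ w, G.Adj v w)
    (c : ℕ)
    (hcex : ∃ C : Finset V, IsVertexCover G C ∧ C.card = c)
    (hcmin : ∀ C : Finset V, IsVertexCover G C → c ≤ C.card)
    (hyp : ∀ x : V, ∃ C : Finset V, IsVertexCover G C ∧ C.card = c ∧ x ∈ C) :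
    V₁.card = c ∧ V₂.card = c ∧
      ∀ x : V, ∃ C : Finset V, IsVertexCover G C ∧ C.card = c ∧ x ∉ C := by
  classical
  obtain ⟨C, hC, hCc⟩ := hcex
  have hdisj12 : ∀ v, v ∈ V₁ → v ∉ V₂ := fun v hv =>
    ((hpart v).resolve_right (fun h => h.2 hv)).2
  have hdisj21 : ∀ v, v ∈ V₂ → v ∉ V₁ := fun v hv =>
    ((hpart v).resolve_left (fun h => h.2 hv)).2
  have htot : ∀ v : V, v ∈ V₁ ∨ v ∈ V₂ := fun v =>
    (hpart v).imp (fun h => h.1) (fun h => h.1)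
  have hbip' : ∀ u v, G.Adj u v → (u ∈ V₂ ∧ v ∈ V₁) ∨ (u ∈ V₁ ∧ v ∈ V₂) :=
    fun u v h => (hbip u v h).symm
  obtain ⟨f, hfinj, hf⟩ := aux_hall G V₁ V₂ hbip hdisj12 c C hC hCc hcmin
  obtain ⟨g, hginj, hg⟩ := aux_hall G V₂ V₁ hbip' hdisj21 c C hC hCc hcmin
  -- the matching partner function
  set m : {x : V // x ∈ C} → V := fun x =>
    if h : (x : V) ∈ V₁ then f ⟨x, Finset.mem_inter.mpr ⟨x.2, h⟩⟩
    else g ⟨x, Finset.mem_inter.mpr ⟨x.2, (htot x).resolve_left h⟩⟩ with hm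
  have hmf : ∀ (x : {x : V // x ∈ C}) (h : (x : V) ∈ V₁),
      m x = f ⟨x, Finset.mem_inter.mpr ⟨x.2, h⟩⟩ := by
    intro x h
    rw [hm]
    exact dif_pos h
  have hmg : ∀ (x : {x : V // x ∈ C}) (h : (x : V) ∉ V₁),
      m x = g ⟨x, Finset.mem_inter.mpr ⟨x.2, (htot x).resolve_left h⟩⟩ := by
    intro x h
    rw [hm]
    exact dif_neg h
  have hm_adj : ∀ x : {x : V // x ∈ C}, G.Adj ↑x (m x) := by
    intro x
    by_cases h : (x : V) ∈ V₁
    · rw [hmf x h]; exact (hf ⟨x, Finset.mem_inter.mpr ⟨x.2, h⟩⟩).1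
    · rw [hmg x h]
      exact (hg ⟨x, Finset.mem_inter.mpr ⟨x.2, (htot x).resolve_left h⟩⟩).1
  have hm_notC : ∀ x, m x ∉ C := by
    intro x
    by_cases h : (x : V) ∈ V₁
    · rw [hmf x h]; exact (hf ⟨x, Finset.mem_inter.mpr ⟨x.2, h⟩⟩).2.2
    · rw [hmg x h]
      exact (hg ⟨x, Finset.mem_inter.mpr ⟨x.2, (htot x).resolve_left h⟩⟩).2.2
  have hm_side : ∀ x : {x : V // x ∈ C}, ((x : V) ∈ V₁ ∧ m x ∈ V₂) ∨ ((x : V) ∈ V₂ ∧ m x ∈ V₁) := by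
    intro x
    by_cases h : (x : V) ∈ V₁
    · rw [hmf x h]; exact Or.inl ⟨h, (hf ⟨x, Finset.mem_inter.mpr ⟨x.2, h⟩⟩).2.1⟩
    · rw [hmg x h]
      exact Or.inr ⟨(htot x).resolve_left h,
        (hg ⟨x, Finset.mem_inter.mpr ⟨x.2, (htot x).resolve_left h⟩⟩).2.1⟩
  have hm_inj : Function.Injective m := by
    intro x y hxy
    by_cases hx : (x : V) ∈ V₁ <;> by_cases hy : (y : V) ∈ V₁
    · rw [hmf x hx, hmf y hy] at hxy
      have h2 := congrArg Subtype.val (hfinj hxy)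
      exact Subtype.ext h2
    · rw [hmf x hx, hmg y hy] at hxy
      have h1 : f ⟨x, Finset.mem_inter.mpr ⟨x.2, hx⟩⟩ ∈ V₂ :=
        (hf ⟨x, Finset.mem_inter.mpr ⟨x.2, hx⟩⟩).2.1
      rw [hxy] at h1
      exact absurd h1 (hdisj12 _
        (hg ⟨y, Finset.mem_inter.mpr ⟨y.2, (htot y).resolve_left hy⟩⟩).2.1)
    · rw [hmg x hx, hmf y hy] at hxy
      have h1 : f ⟨y, Finset.mem_inter.mpr ⟨y.2, hy⟩⟩ ∈ V₂ :=
        (hf ⟨y, Finset.mem_inter.mpr ⟨y.2, hy⟩⟩).2.1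
      rw [← hxy] at h1
      exact absurd h1 (hdisj12 _
        (hg ⟨x, Finset.mem_inter.mpr ⟨x.2, (htot x).resolve_left hx⟩⟩).2.1)
    · rw [hmg x hx, hmg y hy] at hxy
      have h2 := congrArg Subtype.val (hginj hxy)
      exact Subtype.ext h2
  -- every vertex of any minimum cover is an endpoint of the matching
  have L : ∀ D : Finset V, IsVertexCover G D → D.card = c →
      ∀ d ∈ D, ∃ x : {x : V // x ∈ C}, d = ↑x ∨ d = m x := by
    intro D hD hDc d hd
    set h : {x : V // x ∈ C} → {d : V // d ∈ D} := fun x =>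
      if hx : (x : V) ∈ D then ⟨x, hx⟩
      else ⟨m x, (hD ↑x (m x) (hm_adj x)).resolve_left hx⟩ with hh
    have hinj : Function.Injective h := by
      intro x y hxy
      rw [hh] at hxy
      have hval := congrArg Subtype.val hxy
      by_cases hx : (x : V) ∈ D <;> by_cases hy : (y : V) ∈ D
      · simp only [hx, hy, dif_pos] at hval
        exact Subtype.ext hval
      · simp only [hx, hy, dif_pos, dif_neg, not_false_iff] at hval
        exact absurd (hval ▸ x.2 : m y ∈ C) (hm_notC y)
      · simp only [hx, hy, dif_pos, dif_neg, not_false_iff] at hval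
        exact absurd (hval ▸ y.2 : m x ∈ C) (hm_notC x)
      · simp only [hx, hy, dif_neg, not_false_iff] at hval
        exact hm_inj hval
    have hcards : Fintype.card {x : V // x ∈ C} = Fintype.card {d : V // d ∈ D} := by
      rw [Fintype.card_coe, Fintype.card_coe, hCc, hDc]
    have hbij : Function.Bijective h :=
      (Fintype.bijective_iff_injective_and_card h).mpr ⟨hinj, hcards⟩
    obtain ⟨x, hx⟩ := hbij.2 ⟨d, hd⟩
    refine ⟨x, ?_⟩
    have hval := congrArg Subtype.val hx
    rw [hh] at hval
    by_cases hx' : (x : V) ∈ D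
    · simp only [hx', dif_pos] at hval
      exact Or.inl hval.symm
    · simp only [hx', dif_neg, not_false_iff] at hval
      exact Or.inr hval.symm
  have E : ∀ v : V, ∃ x : {x : V // x ∈ C}, v = ↑x ∨ v = m x := by
    intro v
    obtain ⟨D, hD, hDc, hvD⟩ := hyp v
    exact L D hD hDc v hvD
  -- counting each side
  have sideCard : ∀ W₁ W₂ : Finset V,
      (∀ v, v ∈ W₁ → v ∉ W₂) → (∀ v, v ∈ W₂ → v ∉ W₁) →
      (∀ x : {x : V // x ∈ C}, ((x : V) ∈ W₁ ∧ m x ∈ W₂) ∨ ((x : V) ∈ W₂ ∧ m x ∈ W₁)) →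
      W₁.card = c := by
    intro W₁ W₂ hd12 hd21 hside
    set φ : {x : V // x ∈ C} → V := fun x => if (x : V) ∈ W₁ then ↑x else m x with hφ
    have hφmem : ∀ x, φ x ∈ W₁ := by
      intro x
      rw [hφ]
      by_cases h : (x : V) ∈ W₁
      · simpa [h] using h
      · simp only [h, if_neg, not_false_iff]
        exact ((hside x).resolve_left (fun h' => h h'.1)).2
    have hφinj : Function.Injective φ := by
      intro x y hxy
      rw [hφ] at hxy
      by_cases hx : (x : V) ∈ W₁ <;> by_cases hy : (y : V) ∈ W₁
      · simp only [hx, hy, if_pos] at hxy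
        exact Subtype.ext hxy
      · simp only [hx, hy, if_pos, if_neg, not_false_iff] at hxy
        exact absurd (hxy ▸ x.2 : m y ∈ C) (hm_notC y)
      · simp only [hx, hy, if_pos, if_neg, not_false_iff] at hxy
        exact absurd (hxy.symm ▸ y.2 : m x ∈ C) (hm_notC x)
      · simp only [hx, hy, if_neg, not_false_iff] at hxy
        exact hm_inj hxy
    have himg : Finset.univ.image φ = W₁ := by
      apply Finset.Subset.antisymm
      · intro v hv
        rw [Finset.mem_image] at hv
        obtain ⟨x, _, rfl⟩ := hv
        exact hφmem x
      · intro v hv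
        rw [Finset.mem_image]
        obtain ⟨x, hx | hx⟩ := E v
        · refine ⟨x, Finset.mem_univ x, ?_⟩
          rw [hφ]
          simp only [← hx, hv, if_pos]
        · refine ⟨x, Finset.mem_univ x, ?_⟩
          rw [hφ]
          have hxW : (x : V) ∉ W₁ := by
            intro h
            have := ((hside x).resolve_right (fun h' => hd21 _ h'.1 h)).2
            exact hd12 v hv (hx ▸ this)
          simp only [hxW, if_neg, not_false_iff, hx]
    calc W₁.card = (Finset.univ.image φ).card := by rw [himg]
      _ = (Finset.univ : Finset {x : V // x ∈ C}).card :=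
          Finset.card_image_of_injective _ hφinj
      _ = Fintype.card {x : V // x ∈ C} := Finset.card_univ
      _ = C.card := Fintype.card_coe C
      _ = c := hCc
  have hV₁ : V₁.card = c := sideCard V₁ V₂ hdisj12 hdisj21 hm_side
  have hV₂ : V₂.card = c := sideCard V₂ V₁ hdisj21 hdisj12 (fun x => (hm_side x).symm)
  refine ⟨hV₁, hV₂, fun x => ?_⟩
  have hcovV₁ : IsVertexCover G V₁ := fun u v h =>
    (hbip u v h).elim (fun h => Or.inl h.1) (fun h => Or.inr h.2)
  have hcovV₂ : IsVertexCover G V₂ := fun u v h =>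
    (hbip u v h).elim (fun h => Or.inr h.2) (fun h => Or.inl h.1)
  rcases htot x with hx | hx
  · exact ⟨V₂, hcovV₂, hV₂, hdisj12 x hx⟩
  · exact ⟨V₁, hcovV₁, hV₁, hdisj21 x hx⟩
end

section
/- Let G be a Cohen–Macaulay bipartite graph on {x₁,…,x_c} ⊔ {y₁,…,y_c} (satisfying the Herzog–Hibi conditions) and let 𝐛 be a set of pairwise disconnected edges of G. Then there exists a set A ⊆ {1,…,c} with |A| = |𝐛| such that {x_i y_i : i ∈ A} is a set of pairwise disconnected edges of G. -/
/-- The `y`-index of an edge (total function; on actual edges it picks the `Sum.inr` side). -/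
def yIdx {c : ℕ} : (Fin c ⊕ Fin c) × (Fin c ⊕ Fin c) → Fin c
  | (_, Sum.inr j) => j
  | (Sum.inr j, _) => j
  | (Sum.inl i, Sum.inl _) => i

lemma disc_notAdj {W : Type} {G : SimpleGraph W} {v w v' w' a b : W}
    (h : ¬G.Adj v v' ∧ ¬G.Adj v w' ∧ ¬G.Adj w v' ∧ ¬G.Adj w w')
    (ha : a = v ∨ a = w) (hb : b = v' ∨ b = w') : ¬ G.Adj a b := by
  obtain ⟨h1, h2, h3, h4⟩ := h
  rcases ha with rfl | rfl <;> rcases hb with rfl | rfl <;> assumption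


/-- Let `G` be a Cohen–Macaulay bipartite graph on `{x₁,…,x_c} ⊔ {y₁,…,y_c}`
(Herzog–Hibi conditions; `x_i = Sum.inl i`, `y_j = Sum.inr j`), and let `B` be a set of
pairwise disconnected edges of `G`. Then there is `A ⊆ [c]` with `|A| = |B|` such that
`{x_i y_i : i ∈ A}` is a set of pairwise disconnected edges of `G`. -/
theorem pairwise_disconnected_to_matching_edges (c : ℕ) (G : SimpleGraph (Fin c ⊕ Fin c))
    (h1 : ∀ i, G.Adj (Sum.inl i) (Sum.inr i))
    (h2 : ∀ i j, G.Adj (Sum.inl i) (Sum.inr j) → i ≤ j)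
    (h3 : ∀ i j k, G.Adj (Sum.inl i) (Sum.inr j) → G.Adj (Sum.inl j) (Sum.inr k) →
      G.Adj (Sum.inl i) (Sum.inr k))
    (hbip : ∀ i j, ¬G.Adj (Sum.inl i) (Sum.inl j) ∧ ¬G.Adj (Sum.inr i) (Sum.inr j))
    (B : Finset ((Fin c ⊕ Fin c) × (Fin c ⊕ Fin c)))
    (hBadj : ∀ e ∈ B, G.Adj e.1 e.2)
    (hBdisc : (B : Set ((Fin c ⊕ Fin c) × (Fin c ⊕ Fin c))).Pairwise fun e f =>
      EdgesDisconnected G e.1 e.2 f.1 f.2) :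
    ∃ A : Finset (Fin c), A.card = B.card ∧
      (A : Set (Fin c)).Pairwise fun i j =>
        EdgesDisconnected G (Sum.inl i) (Sum.inr i) (Sum.inl j) (Sum.inr j) := by
  -- every edge of B has a representation x_i y_(yIdx e)
  have hrep : ∀ e ∈ B, ∃ i,
      ((e.1 = Sum.inl i ∧ e.2 = Sum.inr (yIdx e)) ∨
       (e.1 = Sum.inr (yIdx e) ∧ e.2 = Sum.inl i)) ∧
      G.Adj (Sum.inl i) (Sum.inr (yIdx e)) := by
    intro e he
    have hadj := hBadj e he
    obtain ⟨a, b⟩ := e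
    rcases a with i | i <;> rcases b with j | j
    · exact absurd hadj (hbip i j).1
    · exact ⟨i, Or.inl ⟨rfl, rfl⟩, hadj⟩
    · exact ⟨j, Or.inr ⟨rfl, rfl⟩, hadj.symm⟩
    · exact absurd hadj (hbip i j).2
  -- endpoint membership facts
  have hmem : ∀ e ∈ B, ∀ i,
      ((e.1 = Sum.inl i ∧ e.2 = Sum.inr (yIdx e)) ∨
       (e.1 = Sum.inr (yIdx e) ∧ e.2 = Sum.inl i)) →
      ((Sum.inl i : Fin c ⊕ Fin c) = e.1 ∨ (Sum.inl i : Fin c ⊕ Fin c) = e.2) ∧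
      ((Sum.inr (yIdx e) : Fin c ⊕ Fin c) = e.1 ∨ (Sum.inr (yIdx e) : Fin c ⊕ Fin c) = e.2) := by
    intro e _ i h
    rcases h with ⟨h, h'⟩ | ⟨h, h'⟩ <;> simp [h, h']
  -- key: for distinct edges, the matching edges at their y-indices are disconnected
  have key : ∀ e ∈ B, ∀ f ∈ B, e ≠ f →
      ¬ G.Adj (Sum.inl (yIdx e)) (Sum.inr (yIdx f)) := by
    intro e he f hf hef
    obtain ⟨i, hei, hadi⟩ := hrep e he
    obtain ⟨k, hfk, hadk⟩ := hrep f hf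
    have hd := hBdisc he hf hef
    have hme := hmem e he i hei
    have hmf := hmem f hf k hfk
    have n1 : ¬ G.Adj (Sum.inl i) (Sum.inr (yIdx f)) := disc_notAdj hd hme.1 hmf.2
    exact fun h => n1 (h3 i (yIdx e) (yIdx f) hadi h)
  -- injectivity of yIdx on B
  have hinj : Set.InjOn (yIdx (c := c)) (B : Set _) := by
    intro e he f hf hy
    by_contra hef
    obtain ⟨i, hei, hadi⟩ := hrep e he
    obtain ⟨k, hfk, hadk⟩ := hrep f hf
    have hd := hBdisc he hf hef
    have hme := hmem e he i hei
    have hmf := hmem f hf k hfk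
    have n : ¬ G.Adj (Sum.inr (yIdx e)) (Sum.inl k) := disc_notAdj hd hme.2 hmf.1
    exact n (hy ▸ hadk).symm
  refine ⟨B.image yIdx, Finset.card_image_of_injOn hinj, ?_⟩
  intro i hi j hj hij
  simp only [Finset.coe_image, Set.mem_image, Finset.mem_coe] at hi hj
  obtain ⟨e, he, rfl⟩ := hi
  obtain ⟨f, hf, rfl⟩ := hj
  have hef : e ≠ f := fun h => hij (by rw [h])
  exact ⟨(hbip _ _).1, key e he f hf hef,
    fun h => key f hf e he hef.symm h.symm, (hbip _ _).2⟩
end
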